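/- arXiv:1201.1467 — 2 statements merged into one kernel-verified Lean document; each statement's English description precedes it below -/
import Mathlib

section
/- On the tangent bundle TM of an n-dimensional Finsler manifold (M,F), the Lie brackets of the adapted frame fields satisfy: [∂̄/∂̄y^a, ξ] = δ̄/δ̄x^a − (ξ(E_a^j) + E_a^i G_i^j) ∂/∂y^j, [∂̄/∂̄y^a, L] = ∂̄/∂̄y^a − L(E_a^i) ∂/∂y^i, [δ̄/δ̄x^a, L] = −L(E_a^i) δ/δx^i, [δ̄/δ̄x^a, ξ] = −(E_a^i G_i^j + ξ(E_a^j)) δ/δx^j + E_a^i y^j R^k_{ij} ∂/∂y^k, and [ξ, L] = −ξ, where R^k_{ij} = δG_i^k/δx^j − δG_j^k/δx^i. -/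
/-!
A local-coordinate framework for the geometry of the tangent bundle `TM` of an
`n`-dimensional Finsler manifold `(M, F)`, following the paper
"A frame on tangent bundle of a Finsler manifold and the natural foliations".

All geometric objects are described through their components on a chart domain
`U` of `TM` (avoiding the zero section): a point `p : Pt n` is the pair of
coordinates `(x^i, y^i)`, and a vector field on `TM` is given by its
components in the natural frame `(∂/∂x^i, ∂/∂y^i)`.
-/

open scoped BigOperators

noncomputable section

namespace FinslerFoliations

/-- A point of the tangent bundle `TM` in local coordinates:
`p.1 = (x^i)` is the base point and `p.2 = (y^i)` is the fibre coordinate. -/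
abbrev Pt (n : ℕ) : Type := (Fin n → ℝ) × (Fin n → ℝ)

/-- A (local) vector field on `TM`, given by its components in the natural
frame: `(X p).1 i` is the coefficient of `∂/∂x^i` and `(X p).2 i` the one of
`∂/∂y^i`. -/
abbrev VF (n : ℕ) : Type := Pt n → Pt n

variable {n : ℕ}

/-- The coordinate vector `∂/∂x^i`. -/
def ex (i : Fin n) : Pt n := (Pi.single i 1, 0)

/-- The coordinate vector `∂/∂y^i`. -/
def ey (i : Fin n) : Pt n := (0, Pi.single i 1)

/-- Partial derivative of a scalar function in the constant direction `v`. -/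
def pd (v : Pt n) (f : Pt n → ℝ) (p : Pt n) : ℝ := fderiv ℝ f p v

/-- Derivative of a scalar function along a vector field. -/
def Dv (X : VF n) (f : Pt n → ℝ) (p : Pt n) : ℝ := fderiv ℝ f p (X p)

/-- The Lie bracket of two vector fields, in coordinates. -/
def lie (X Y : VF n) : VF n := fun p => fderiv ℝ Y p (X p) - fderiv ℝ X p (Y p)

/-- Local-coordinate data of an `n`-dimensional Finsler manifold `(M, F)` on a
chart domain `U ⊆ TM` avoiding the zero section: the fundamental function `F`
(smooth, positive and positively `1`-homogeneous in `y`), the fundamental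
tensor `g_{ij} = ½ ∂²F²/∂y^i∂y^j` (symmetric and positive definite) with its
inverse `g^{ij}`, the spray coefficients
`G^i = (g^{ij}/4)(∂²F²/∂y^j∂x^k y^k − ∂F²/∂x^j)` and the nonlinear connection
coefficients `G_i^j = ∂G^j/∂y^i`. -/
structure Chart (n : ℕ) : Type where
  /-- the chart domain in `TM` -/
  U : Set (Pt n)
  hUopen : IsOpen U
  hUslit : ∀ p ∈ U, p.2 ≠ 0
  /-- the fundamental function `F` -/
  F : Pt n → ℝ
  Fpos : ∀ p ∈ U, 0 < F p
  Fsmooth : ContDiffOn ℝ (⊤ : ℕ∞) F U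
  Fhomog : ∀ p ∈ U, ∀ t : ℝ, 0 < t → (p.1, t • p.2) ∈ U →
    F (p.1, t • p.2) = t * F p
  /-- the fundamental tensor `g_{ij}` -/
  g : Fin n → Fin n → Pt n → ℝ
  gdef : ∀ i j, ∀ p ∈ U,
    g i j p = (1/2) * pd (ey i) (pd (ey j) (fun q => F q ^ 2)) p
  gsmooth : ∀ i j, ContDiffOn ℝ (⊤ : ℕ∞) (g i j) U
  gsymm : ∀ i j, ∀ p ∈ U, g i j p = g j i p
  gposdef : ∀ p ∈ U, ∀ v : Fin n → ℝ, v ≠ 0 →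
    0 < ∑ i, ∑ j, g i j p * v i * v j
  /-- the inverse `g^{ij}` of the fundamental tensor -/
  ginv : Fin n → Fin n → Pt n → ℝ
  hginv : ∀ i j, ∀ p ∈ U,
    (∑ k, g i k p * ginv k j p) = if i = j then (1:ℝ) else 0
  /-- the spray coefficients `G^i` -/
  spray : Fin n → Pt n → ℝ
  spraydef : ∀ i, ∀ p ∈ U, spray i p = (1/4) * ∑ j, ginv i j p *
      ((∑ k, pd (ey j) (pd (ex k) (fun q => F q ^ 2)) p * p.2 k)
        - pd (ex j) (fun q => F q ^ 2) p)
  /-- the nonlinear connection coefficients `G_i^j` -/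
  N : Fin n → Fin n → Pt n → ℝ
  Ndef : ∀ i j, ∀ p ∈ U, N i j p = pd (ey i) (spray j) p
  Nsmooth : ∀ i j, ContDiffOn ℝ (⊤ : ℕ∞) (N i j) U

variable (fc : Chart n)

/-- the vertical frame field `∂/∂y^i`. -/
def dyv (i : Fin n) : VF n := fun _ => ey i

/-- the horizontal frame field `δ/δx^i = ∂/∂x^i − G_i^j ∂/∂y^j`. -/
def ddx (i : Fin n) : VF n := fun p => (Pi.single i 1, fun j => -(fc.N i j p))

/-- the vertical Liouville vector field `L = y^i ∂/∂y^i`. -/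
def LV : VF n := fun p => ((0 : Fin n → ℝ), p.2)

/-- the horizontal Liouville vector field `ξ = y^i δ/δx^i`. -/
def XI : VF n := fun p => (p.2, fun j => -(∑ i, p.2 i * fc.N i j p))

/-- the dual coframe `δy^i = dy^i + G_j^i dx^j`, applied to a tangent vector. -/
def dely (i : Fin n) (p : Pt n) (v : Pt n) : ℝ := v.2 i + ∑ j, fc.N j i p * v.1 j

/-- the Sasaki lifted metric `G = g_{ij} dx^i ⊗ dx^j + g_{ij} δy^i ⊗ δy^j`. -/
def Gs (p : Pt n) (v w : Pt n) : ℝ :=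
  ∑ i, ∑ j, fc.g i j p * (v.1 i * w.1 j + dely fc i p v * dely fc j p w)

/-- the natural almost complex structure
`J = δ/δx^i ⊗ δy^i − ∂/∂y^i ⊗ dx^i`, as a pointwise endomorphism. -/
def Jm (p : Pt n) (v : Pt n) : Pt n :=
  (fun i => dely fc i p v,
   fun k => -(∑ i, dely fc i p v * fc.N i k p) - v.1 k)

/-- `J` applied to a vector field. -/
def Jvf (X : VF n) : VF n := fun p => Jm fc p (X p)

/-- the curvature coefficients `R^k_{ij} = δG_i^k/δx^j − δG_j^k/δx^i` of the
nonlinear connection. -/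
def Rc (i j k : Fin n) (p : Pt n) : ℝ :=
  Dv (ddx fc j) (fc.N i k) p - Dv (ddx fc i) (fc.N j k) p

/-- the Cartan tensor `g_{ijk} = ½ ∂g_{ij}/∂y^k`. -/
def Cartan (i j k : Fin n) (p : Pt n) : ℝ := (1/2) * pd (ey k) (fc.g i j) p

/-- the vertical adapted frame field `∂̄/∂̄y^a = E_a^i ∂/∂y^i`. -/
def vb (E : Fin (n-1) → Fin n → Pt n → ℝ) (a : Fin (n-1)) : VF n :=
  fun p => ((0 : Fin n → ℝ), fun i => E a i p)

/-- the horizontal adapted frame field `δ̄/δ̄x^a = J(∂̄/∂̄y^a)`. -/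
def hb (E : Fin (n-1) → Fin n → Pt n → ℝ) (a : Fin (n-1)) : VF n :=
  fun p => Jm fc p (vb E a p)

/-- `E` is the coefficient matrix of an adapted local frame
`∂̄/∂̄y^a = E_a^i ∂/∂y^i`, `a = 1, …, n−1`, of the distribution `V'TM` (the
`G`-orthogonal complement of the vertical Liouville field `L` inside the
vertical distribution `VTM`): the coefficients are smooth, pointwise linearly
independent, and each `∂̄/∂̄y^a` is `G`-orthogonal to `L`. -/
def IsAdaptedFrame (E : Fin (n-1) → Fin n → Pt n → ℝ) : Prop :=
  (∀ a i, ContDiffOn ℝ (⊤ : ℕ∞) (E a i) fc.U) ∧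
  (∀ p ∈ fc.U, LinearIndependent ℝ (fun a : Fin (n-1) => (fun i => E a i p))) ∧
  (∀ a, ∀ p ∈ fc.U, Gs fc p (vb E a p) (LV p) = 0)

/-- `g_{ab} = g_{ij} E_a^i E_b^j`, the components of the Sasaki metric in the
adapted frame. -/
def gb (E : Fin (n-1) → Fin n → Pt n → ℝ) (p : Pt n) (a b : Fin (n-1)) : ℝ :=
  ∑ i, ∑ j, fc.g i j p * E a i p * E b j p

/-- the matrix `(g_{ab})`. -/
def gbMat (E : Fin (n-1) → Fin n → Pt n → ℝ) (p : Pt n) :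
    Matrix (Fin (n-1)) (Fin (n-1)) ℝ :=
  Matrix.of fun a b => gb fc E p a b

/-- `(g^{ab})`, the inverse of the matrix `(g_{ab})`. -/
def gbInv (E : Fin (n-1) → Fin n → Pt n → ℝ) (p : Pt n) (a b : Fin (n-1)) : ℝ :=
  (gbMat fc E p)⁻¹ a b

/-- `g_{abc} = ½ E_a^i E_b^j E_c^k g_{ijk}`, the Cartan tensor in the adapted
frame. -/
def CartanBar (E : Fin (n-1) → Fin n → Pt n → ℝ) (a b c : Fin (n-1))
    (p : Pt n) : ℝ :=
  (1/2) * ∑ i, ∑ j, ∑ k, E a i p * E b j p * E c k p * Cartan fc i j k p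

/-- `R_{cab} = E_c^i E_a^j E_b^k R^h_{jk} g_{hi}`, the lowered curvature of the
nonlinear connection in the adapted frame. -/
def Rlow (E : Fin (n-1) → Fin n → Pt n → ℝ) (c a b : Fin (n-1)) (p : Pt n) : ℝ :=
  ∑ i, ∑ j, ∑ k, ∑ h, E c i p * E a j p * E b k p * Rc fc j k h p * fc.g h i p

/-- `nab` is the Levi-Civita connection of the Sasaki metric `G` on the chart
domain, characterized by the Koszul formula
`2G(∇_X Y, Z) = X G(Y,Z) + Y G(X,Z) − Z G(X,Y)
  − G([X,Z],Y) − G([Y,Z],X) + G([X,Y],Z)`. -/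
def IsLeviCivita (nab : VF n → VF n → VF n) : Prop :=
  ∀ X Y Z : VF n,
    ContDiffOn ℝ (⊤ : ℕ∞) X fc.U → ContDiffOn ℝ (⊤ : ℕ∞) Y fc.U →
    ContDiffOn ℝ (⊤ : ℕ∞) Z fc.U → ∀ p ∈ fc.U,
    2 * Gs fc p (nab X Y p) (Z p) =
      Dv X (fun q => Gs fc q (Y q) (Z q)) p
      + Dv Y (fun q => Gs fc q (X q) (Z q)) p
      - Dv Z (fun q => Gs fc q (X q) (Y q)) p
      - Gs fc p (lie X Z p) (Y p)
      - Gs fc p (lie Y Z p) (X p)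
      + Gs fc p (lie X Y p) (Z p)

/-- the `G`-orthogonal projection of a vector field onto the line spanned by
the vertical Liouville field `L` (the normal direction to the indicatrix). -/
def projL (X : VF n) : VF n :=
  fun p => (Gs fc p (X p) (LV p) / Gs fc p (LV p) (LV p)) • LV p

/-- the curvature tensor `R(X,Y)Z = ∇_X ∇_Y Z − ∇_Y ∇_X Z − ∇_{[X,Y]} Z` of a
connection. -/
def curv (nab : VF n → VF n → VF n) (X Y Z : VF n) : VF n :=
  fun p => nab X (nab Y Z) p - nab Y (nab X Z) p - nab (lie X Y) Z p

/-- membership in `V'TM`: vertical and `G`-orthogonal to `L`. -/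
def InV' (p v : Pt n) : Prop := v.1 = 0 ∧ Gs fc p v (LV p) = 0

/-- membership in `V^⊥TM`: `G`-orthogonal to `L`. -/
def InVperp (p v : Pt n) : Prop := Gs fc p v (LV p) = 0

/-- membership in `HTM ⊕ ⟨L⟩`, the `G`-orthogonal complement of `V'TM`. -/
def InHL (p v : Pt n) : Prop := ∃ c : ℝ, ∀ i, dely fc i p v = c * p.2 i

/-- membership in the line spanned by the vertical Liouville field `L`. -/
def InL (p v : Pt n) : Prop := ∃ c : ℝ, v = c • LV p

/-- membership in the plane spanned by `L` and `ξ`. -/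
def InLXi (p v : Pt n) : Prop := ∃ c d : ℝ, v = c • LV p + d • XI fc p

/-- membership in the `G`-orthogonal complement of `⟨L, ξ⟩`. -/
def InLXiPerp (p v : Pt n) : Prop :=
  Gs fc p v (LV p) = 0 ∧ Gs fc p v (XI fc p) = 0

/-- the contact `1`-form `η = y^i g_{ij} dx^j` of the indicatrix bundle,
applied to a tangent vector. -/
def etaC (p : Pt n) (v : Pt n) : ℝ := ∑ i, ∑ j, p.2 i * fc.g i j p * v.1 j

/-- the `(1,1)`-tensor `φ` of the contact structure of the indicatrix bundle:
`φ = J` on the contact distribution `D` and `φ(ξ) = 0`; on tangent vectors of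
`IM` it is given by `φ(v) = J v + η(v) L`. -/
def phiC (p : Pt n) (v : Pt n) : Pt n := Jm fc p v + etaC fc p v • LV p

/-- `φ` applied to a vector field. -/
def phiVF (X : VF n) : VF n := fun p => phiC fc p (X p)

/-- `η` applied to a vector field, as a scalar function. -/
def etaVF (X : VF n) : Pt n → ℝ := fun p => etaC fc p (X p)

/-- the exterior derivative `dη(X,Y) = X(η(Y)) − Y(η(X)) − η([X,Y])`. -/
def dEta (X Y : VF n) (p : Pt n) : ℝ :=
  Dv X (etaVF fc Y) p - Dv Y (etaVF fc X) p - etaC fc p (lie X Y p)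

/-- the normality tensor `N^{(1)} = [φ,φ] + 2 dη ⊗ ξ` of the contact structure
of the indicatrix bundle, evaluated on vector fields, where
`[φ,φ](X,Y) = φ²[X,Y] + [φX,φY] − φ[φX,Y] − φ[X,φY]` is the Nijenhuis torsion
of `φ`. -/
def Ntensor (X Y : VF n) : VF n := fun p =>
  phiC fc p (phiC fc p (lie X Y p)) + lie (phiVF fc X) (phiVF fc Y) p
    - phiC fc p (lie (phiVF fc X) Y p) - phiC fc p (lie X (phiVF fc Y) p)
    + (2 * dEta fc X Y p) • XI fc p

/-- a vector field of `TM` is tangent to the indicatrix bundle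
`IM = {F = 1}` (equivalently, `G`-orthogonal to the normal field `L` along
`IM`). -/
def TangentIM (X : VF n) : Prop :=
  ∀ p ∈ fc.U, fc.F p = 1 → Gs fc p (X p) (LV p) = 0

/-- The indicatrix bundle `IM`, with its natural contact metric structure
`(φ, η, ξ, Ḡ)`, is a Sasakian manifold: the contact structure is normal, i.e.
the tensor `N^{(1)} = [φ,φ] + 2 dη ⊗ ξ` vanishes on vector fields tangent to
`IM`. -/
def IsSasakianIM : Prop :=
  ∀ X Y : VF n, ContDiffOn ℝ (⊤ : ℕ∞) X fc.U → ContDiffOn ℝ (⊤ : ℕ∞) Y fc.U →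
    TangentIM fc X → TangentIM fc Y →
    ∀ p ∈ fc.U, fc.F p = 1 → Ntensor fc X Y p = 0

/-- the Nijenhuis tensor of the natural almost complex structure `J`:
`N_J(X,Y) = [JX,JY] − J[JX,Y] − J[X,JY] + J²[X,Y]`, with `J² = −Id`. -/
def NijJ (X Y : VF n) : VF n := fun p =>
  lie (Jvf fc X) (Jvf fc Y) p - Jm fc p (lie (Jvf fc X) Y p)
    - Jm fc p (lie X (Jvf fc Y) p) - lie X Y p

/-- the almost complex structure `J̄` on `TM ≅ IM × ℝ` induced by the contact
structure `(φ, η, ξ)` of the indicatrix bundle via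
`J̄(X + f L) = φ(X) − f ξ + η(X) L`, where `X` is tangent to `IM`;
a tangent vector `v` is decomposed as `v = vᵀ + f L` with
`f = G(v,L)/G(L,L)` and `vᵀ` tangent to the indicatrix. -/
def Jbar (p : Pt n) (v : Pt n) : Pt n :=
  phiC fc p (v - (Gs fc p v (LV p) / Gs fc p (LV p) (LV p)) • LV p)
    - (Gs fc p v (LV p) / Gs fc p (LV p) (LV p)) • XI fc p
    + etaC fc p (v - (Gs fc p v (LV p) / Gs fc p (LV p) (LV p)) • LV p) • LV p


section Aux

open Filter Topology

variable {n : ℕ} (fc : Chart n)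

/-- coordinate CLM for `v.1 i` -/
def cx (i : Fin n) : Pt n →L[ℝ] ℝ :=
  (ContinuousLinearMap.proj i).comp (ContinuousLinearMap.fst ℝ (Fin n → ℝ) (Fin n → ℝ))

/-- coordinate CLM for `v.2 i` -/
def cy (i : Fin n) : Pt n →L[ℝ] ℝ :=
  (ContinuousLinearMap.proj i).comp (ContinuousLinearMap.snd ℝ (Fin n → ℝ) (Fin n → ℝ))

@[simp] lemma cx_apply (i : Fin n) (v : Pt n) : cx i v = v.1 i := rfl
@[simp] lemma cy_apply (i : Fin n) (v : Pt n) : cy i v = v.2 i := rfl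

lemma contDiffAt_of_on {f : Pt n → ℝ} (hf : ContDiffOn ℝ (⊤:ℕ∞) f fc.U) {p : Pt n}
    (hp : p ∈ fc.U) : ContDiffAt ℝ (⊤:ℕ∞) f p :=
  hf.contDiffAt (fc.hUopen.mem_nhds hp)

lemma diffAt_of_on {f : Pt n → ℝ} (hf : ContDiffOn ℝ (⊤:ℕ∞) f fc.U) {p : Pt n}
    (hp : p ∈ fc.U) : DifferentiableAt ℝ f p :=
  (contDiffAt_of_on fc hf hp).differentiableAt (by simp)

lemma pd_contDiffAt {f : Pt n → ℝ} (hf : ContDiffOn ℝ (⊤:ℕ∞) f fc.U) {p : Pt n}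
    (hp : p ∈ fc.U) (v : Pt n) : ContDiffAt ℝ (⊤:ℕ∞) (pd v f) p :=
  ((contDiffAt_of_on fc hf hp).fderiv_right (le_of_eq ENat.coe_top_add_one)).clm_apply contDiffAt_const

lemma pd_contDiffOn {f : Pt n → ℝ} (hf : ContDiffOn ℝ (⊤:ℕ∞) f fc.U) (v : Pt n) :
    ContDiffOn ℝ (⊤:ℕ∞) (pd v f) fc.U :=
  fun _ hp => (pd_contDiffAt fc hf hp v).contDiffWithinAt

lemma F2_contDiffOn : ContDiffOn ℝ (⊤:ℕ∞) (fun q => fc.F q ^ 2) fc.U := fc.Fsmooth.pow 2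

end Aux
section Matrixx

open Filter Topology

variable {n : ℕ} (fc : Chart n)

def gmat (q : Pt n) : Matrix (Fin n) (Fin n) ℝ := Matrix.of fun i j => fc.g i j q

lemma gmat_mul {p : Pt n} (hp : p ∈ fc.U) :
    gmat fc p * Matrix.of (fun i j => fc.ginv i j p) = 1 := by
  ext i j
  simpa [Matrix.mul_apply, gmat, Matrix.one_apply] using fc.hginv i j p hp

lemma ginv_eq {p : Pt n} (hp : p ∈ fc.U) (i j : Fin n) :
    fc.ginv i j p = (gmat fc p)⁻¹ i j := by
  rw [Matrix.inv_eq_right_inv (gmat_mul fc hp)]; rfl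

lemma gmat_det_ne {p : Pt n} (hp : p ∈ fc.U) : (gmat fc p).det ≠ 0 :=
  (Matrix.isUnit_det_of_right_inverse (gmat_mul fc hp)).ne_zero

lemma contDiffAt_det {m : ℕ} {M : Pt n → Matrix (Fin m) (Fin m) ℝ} {p : Pt n}
    (h : ∀ i j, ContDiffAt ℝ (⊤:ℕ∞) (fun q => M q i j) p) :
    ContDiffAt ℝ (⊤:ℕ∞) (fun q => (M q).det) p := by
  simp only [Matrix.det_apply']
  exact ContDiffAt.sum fun σ _ =>
    contDiffAt_const.mul (contDiffAt_prod fun i _ => h (σ i) i)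

lemma contDiffAt_gmatInv {p : Pt n} (hp : p ∈ fc.U) (i j : Fin n) :
    ContDiffAt ℝ (⊤:ℕ∞) (fun q => (gmat fc q)⁻¹ i j) p := by
  have hg : ∀ i j, ContDiffAt ℝ (⊤:ℕ∞) (fun q => gmat fc q i j) p := fun i j =>
    contDiffAt_of_on fc (fc.gsmooth i j) hp
  have hdet : ContDiffAt ℝ (⊤:ℕ∞) (fun q => (gmat fc q).det) p := contDiffAt_det hg
  have hadj : ContDiffAt ℝ (⊤:ℕ∞) (fun q => (gmat fc q).adjugate i j) p := by
    simp only [Matrix.adjugate_apply]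
    refine contDiffAt_det fun i' k => ?_
    simp only [Matrix.updateRow_apply]
    by_cases h : i' = j
    · simp only [h, if_pos rfl]; exact contDiffAt_const
    · simp only [if_neg h]; exact hg i' k
  have heq : (fun q => (gmat fc q)⁻¹ i j)
      = fun q => ((gmat fc q).det)⁻¹ * (gmat fc q).adjugate i j := by
    funext q
    rw [Matrix.inv_def, Ring.inverse_eq_inv']
    rfl
  rw [heq]
  exact (hdet.inv (gmat_det_ne fc hp)).mul hadj

def sprayF (k : Fin n) (q : Pt n) : ℝ :=
  1/4 * ∑ j, (gmat fc q)⁻¹ k j *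
    ((∑ m, pd (ey j) (pd (ex m) (fun r => fc.F r ^ 2)) q * q.2 m)
      - pd (ex j) (fun r => fc.F r ^ 2) q)

lemma spray_eqOn {p : Pt n} (hp : p ∈ fc.U) (k : Fin n) :
    fc.spray k =ᶠ[𝓝 p] sprayF fc k := by
  filter_upwards [fc.hUopen.mem_nhds hp] with q hq
  rw [fc.spraydef k q hq, sprayF]
  exact congrArg _ (Finset.sum_congr rfl fun j _ => by rw [ginv_eq fc hq])

lemma sprayF_contDiffAt {p : Pt n} (hp : p ∈ fc.U) (k : Fin n) :
    ContDiffAt ℝ (⊤:ℕ∞) (sprayF fc k) p := by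
  refine contDiffAt_const.mul (ContDiffAt.sum fun j _ => ?_)
  refine (contDiffAt_gmatInv fc hp k j).mul
    (ContDiffAt.sub (ContDiffAt.sum fun m _ => ?_)
      (pd_contDiffAt fc (F2_contDiffOn fc) hp (ex j)))
  exact (pd_contDiffAt fc (pd_contDiffOn fc (F2_contDiffOn fc) (ex m)) hp (ey j)).mul
    ((cy m).contDiff.contDiffAt)

lemma spray_contDiffAt {p : Pt n} (hp : p ∈ fc.U) (k : Fin n) :
    ContDiffAt ℝ (⊤:ℕ∞) (fc.spray k) p :=
  (sprayF_contDiffAt fc hp k).congr_of_eventuallyEq (spray_eqOn fc hp k)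

lemma spray_diffAt {p : Pt n} (hp : p ∈ fc.U) (k : Fin n) :
    DifferentiableAt ℝ (fc.spray k) p :=
  (spray_contDiffAt fc hp k).differentiableAt (by simp)

end Matrixx
section Homog

open Filter Topology

variable {n : ℕ} (fc : Chart n)

def psiL (t : ℝ) : Pt n →L[ℝ] Pt n :=
  (ContinuousLinearMap.fst ℝ (Fin n → ℝ) (Fin n → ℝ)).prod
    (t • ContinuousLinearMap.snd ℝ (Fin n → ℝ) (Fin n → ℝ))

@[simp] lemma psiL_apply (t : ℝ) (q : Pt n) : psiL (n := n) t q = (q.1, t • q.2) := rfl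

lemma homog_fderiv {f : Pt n → ℝ} {t c : ℝ} {p : Pt n} (hp : p ∈ fc.U)
    (hpt : (p.1, t • p.2) ∈ fc.U)
    (hdf : ∀ q ∈ fc.U, DifferentiableAt ℝ f q)
    (hhom : ∀ q ∈ fc.U, (q.1, t • q.2) ∈ fc.U → f (q.1, t • q.2) = c * f q)
    (v : Pt n) :
    fderiv ℝ f (p.1, t • p.2) (v.1, t • v.2) = c * fderiv ℝ f p v := by
  have hev : (fun q => f (psiL (n := n) t q)) =ᶠ[𝓝 p] fun q => c * f q := by
    have hmem : fc.U ∩ (psiL (n := n) t) ⁻¹' fc.U ∈ 𝓝 p :=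
      (fc.hUopen.inter (fc.hUopen.preimage (psiL (n := n) t).continuous)).mem_nhds
        ⟨hp, by simpa using hpt⟩
    filter_upwards [hmem] with q hq
    exact hhom q hq.1 (by simpa using hq.2)
  have h1 : fderiv ℝ (fun q => f (psiL (n := n) t q)) p
      = (fderiv ℝ f (psiL (n := n) t p)).comp (psiL (n := n) t) :=
    ((hdf _ (by simpa using hpt)).hasFDerivAt.comp p (psiL (n := n) t).hasFDerivAt).fderiv
  have h2 : fderiv ℝ (fun q => c * f q) p = c • fderiv ℝ f p :=
    ((hdf p hp).hasFDerivAt.const_mul c).fderiv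
  have h3 := Filter.EventuallyEq.fderiv_eq (𝕜 := ℝ) hev
  rw [h1, h2] at h3
  have h4 := congrArg (fun (L : Pt n →L[ℝ] ℝ) => L v) h3
  simpa using h4

variable {t : ℝ} {p : Pt n}

lemma homog_F2 (hp : p ∈ fc.U) (ht : 0 < t) (hpt : (p.1, t • p.2) ∈ fc.U) :
    fc.F (p.1, t • p.2) ^ 2 = t ^ 2 * fc.F p ^ 2 := by
  rw [fc.Fhomog p hp t ht hpt]; ring

lemma homog_pdx (hp : p ∈ fc.U) (ht : 0 < t) (hpt : (p.1, t • p.2) ∈ fc.U) (j : Fin n) :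
    pd (ex j) (fun r => fc.F r ^ 2) (p.1, t • p.2)
      = t ^ 2 * pd (ex j) (fun r => fc.F r ^ 2) p := by
  have h := homog_fderiv fc hp hpt (fun q hq => diffAt_of_on fc (F2_contDiffOn fc) hq)
    (fun q hq hqt => homog_F2 fc hq ht hqt) (ex j)
  simpa [ex, pd] using h

lemma homog_pdy (hp : p ∈ fc.U) (ht : 0 < t) (hpt : (p.1, t • p.2) ∈ fc.U) (j : Fin n) :
    pd (ey j) (fun r => fc.F r ^ 2) (p.1, t • p.2)
      = t * pd (ey j) (fun r => fc.F r ^ 2) p := by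
  have h := homog_fderiv fc hp hpt (fun q hq => diffAt_of_on fc (F2_contDiffOn fc) hq)
    (fun q hq hqt => homog_F2 fc hq ht hqt) (ey j)
  have he : (((ey j : Pt n).1, t • (ey j : Pt n).2) : Pt n) = t • (ey j : Pt n) := by
    simp [ey, Prod.smul_def]
  rw [he, map_smul, smul_eq_mul] at h
  have goal : t * (fderiv ℝ (fun q => fc.F q ^ 2) (p.1, t • p.2)) (ey j)
      = t * (t * (fderiv ℝ (fun q => fc.F q ^ 2) p) (ey j)) := by rw [h]; ring
  exact mul_left_cancel₀ ht.ne' goal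

end Homog
section Homog2

open Filter Topology

variable {n : ℕ} (fc : Chart n) {t : ℝ} {p : Pt n}

lemma homog_pdyx (hp : p ∈ fc.U) (ht : 0 < t) (hpt : (p.1, t • p.2) ∈ fc.U) (j m : Fin n) :
    pd (ey j) (pd (ex m) (fun r => fc.F r ^ 2)) (p.1, t • p.2)
      = t * pd (ey j) (pd (ex m) (fun r => fc.F r ^ 2)) p := by
  have h := homog_fderiv fc hp hpt
    (fun q hq => diffAt_of_on fc (pd_contDiffOn fc (F2_contDiffOn fc) (ex m)) hq)
    (fun q hq hqt => homog_pdx fc hq ht hqt m) (ey j)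
  have he : (((ey j : Pt n).1, t • (ey j : Pt n).2) : Pt n) = t • (ey j : Pt n) := by
    simp [ey, Prod.smul_def]
  rw [he, map_smul, smul_eq_mul] at h
  have goal : t * (fderiv ℝ (pd (ex m) (fun q => fc.F q ^ 2)) (p.1, t • p.2)) (ey j)
      = t * (t * (fderiv ℝ (pd (ex m) (fun q => fc.F q ^ 2)) p) (ey j)) := by rw [h]; ring
  exact mul_left_cancel₀ ht.ne' goal

lemma homog_g (hp : p ∈ fc.U) (ht : 0 < t) (hpt : (p.1, t • p.2) ∈ fc.U) (i j : Fin n) :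
    fc.g i j (p.1, t • p.2) = fc.g i j p := by
  have h := homog_fderiv fc hp hpt
    (fun q hq => diffAt_of_on fc (pd_contDiffOn fc (F2_contDiffOn fc) (ey j)) hq)
    (fun q hq hqt => homog_pdy fc hq ht hqt j) (ey i)
  have he : (((ey i : Pt n).1, t • (ey i : Pt n).2) : Pt n) = t • (ey i : Pt n) := by
    simp [ey, Prod.smul_def]
  rw [he, map_smul, smul_eq_mul] at h
  have h2 : (fderiv ℝ (pd (ey j) (fun q => fc.F q ^ 2)) (p.1, t • p.2)) (ey i)
      = (fderiv ℝ (pd (ey j) (fun q => fc.F q ^ 2)) p) (ey i) :=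
    mul_left_cancel₀ ht.ne' h
  rw [fc.gdef i j _ hpt, fc.gdef i j p hp]
  exact congrArg _ h2

lemma gmat_homog (hp : p ∈ fc.U) (ht : 0 < t) (hpt : (p.1, t • p.2) ∈ fc.U) :
    gmat fc (p.1, t • p.2) = gmat fc p := by
  ext i j
  exact homog_g fc hp ht hpt i j

lemma homog_ginv (hp : p ∈ fc.U) (ht : 0 < t) (hpt : (p.1, t • p.2) ∈ fc.U) (i j : Fin n) :
    fc.ginv i j (p.1, t • p.2) = fc.ginv i j p := by
  rw [ginv_eq fc hpt, ginv_eq fc hp, gmat_homog fc hp ht hpt]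

lemma homog_spray (hp : p ∈ fc.U) (ht : 0 < t) (hpt : (p.1, t • p.2) ∈ fc.U) (k : Fin n) :
    fc.spray k (p.1, t • p.2) = t ^ 2 * fc.spray k p := by
  rw [fc.spraydef k _ hpt, fc.spraydef k p hp]
  simp only [homog_ginv fc hp ht hpt, homog_pdyx fc hp ht hpt, homog_pdx fc hp ht hpt]
  rw [Finset.mul_sum, Finset.mul_sum, Finset.mul_sum]
  refine Finset.sum_congr rfl fun j _ => ?_
  have hin : ∑ m, t * pd (ey j) (pd (ex m) (fun q => fc.F q ^ 2)) p * ((t • p.2) m)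
      = t ^ 2 * ∑ m, pd (ey j) (pd (ex m) (fun q => fc.F q ^ 2)) p * p.2 m := by
    rw [Finset.mul_sum]
    refine Finset.sum_congr rfl fun m _ => ?_
    simp only [Pi.smul_apply, smul_eq_mul]; ring
  rw [hin]; ring

lemma homog_N (hp : p ∈ fc.U) (ht : 0 < t) (hpt : (p.1, t • p.2) ∈ fc.U) (i k : Fin n) :
    fc.N i k (p.1, t • p.2) = t * fc.N i k p := by
  have h := homog_fderiv fc hp hpt (fun q hq => spray_diffAt fc hq k)
    (fun q hq hqt => homog_spray fc hq ht hqt k) (ey i)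
  have he : (((ey i : Pt n).1, t • (ey i : Pt n).2) : Pt n) = t • (ey i : Pt n) := by
    simp [ey, Prod.smul_def]
  rw [he, map_smul, smul_eq_mul] at h
  have h2 : (fderiv ℝ (fc.spray k) (p.1, t • p.2)) (ey i)
      = t * (fderiv ℝ (fc.spray k) p) (ey i) :=
    mul_left_cancel₀ ht.ne' (by rw [h]; ring)
  rw [fc.Ndef i k _ hpt, fc.Ndef i k p hp]
  exact h2

end Homog2
section Euler

open Filter Topology

variable {n : ℕ} (fc : Chart n) {p : Pt n}

lemma snd_eq_sum (w : Fin n → ℝ) :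
    (((0 : Fin n → ℝ), w) : Pt n) = ∑ i, w i • (ey i : Pt n) := by
  refine Prod.ext ?_ ?_
  · rw [Prod.fst_sum]; simp [ey]
  · rw [Prod.snd_sum]
    funext m
    rw [Finset.sum_apply]
    simp [ey, Pi.single_apply, mul_ite, Finset.sum_ite_eq]

lemma euler_general {f : Pt n → ℝ} {k : ℕ} (hp : p ∈ fc.U)
    (hdf : DifferentiableAt ℝ f p)
    (hhom : ∀ t : ℝ, 0 < t → (p.1, t • p.2) ∈ fc.U → f (p.1, t • p.2) = t ^ k * f p) :
    fderiv ℝ f p ((0 : Fin n → ℝ), p.2) = k * f p := by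
  have hγ : HasDerivAt (fun t : ℝ => ((p.1, t • p.2) : Pt n)) (((0 : Fin n → ℝ), p.2)) 1 := by
    refine HasDerivAt.prodMk (hasDerivAt_const 1 p.1) ?_
    simpa using (hasDerivAt_id (1:ℝ)).smul_const p.2
  have h1 : ((p.1, (1:ℝ) • p.2) : Pt n) = p := by simp
  have hf : HasFDerivAt f (fderiv ℝ f p) ((p.1, (1:ℝ) • p.2) : Pt n) := by rw [h1]; exact hdf.hasFDerivAt
  have hcomp : HasDerivAt (fun t : ℝ => f (p.1, t • p.2))
      (fderiv ℝ f p (((0 : Fin n → ℝ), p.2))) 1 := hf.comp_hasDerivAt 1 hγ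
  have hev : (fun t : ℝ => f (p.1, t • p.2)) =ᶠ[𝓝 (1:ℝ)] fun t => t ^ k * f p := by
    have hc : Continuous (fun t : ℝ => ((p.1, t • p.2) : Pt n)) :=
      continuous_const.prodMk (continuous_id.smul continuous_const)
    have hU : ∀ᶠ t : ℝ in 𝓝 1, ((p.1, t • p.2) : Pt n) ∈ fc.U := by
      have := hc.continuousAt (x := (1:ℝ)).preimage_mem_nhds
        (by rw [show ((p.1, (1:ℝ) • p.2) : Pt n) = p from h1]; exact fc.hUopen.mem_nhds hp)
      exact this
    filter_upwards [hU, eventually_gt_nhds zero_lt_one] with t h1' h2'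
    exact hhom t h2' h1'
  have hpoly : HasDerivAt (fun t : ℝ => t ^ k * f p) ((k : ℝ) * f p) 1 := by
    simpa using (hasDerivAt_pow k (1:ℝ)).mul_const (f p)
  exact (hcomp.congr_of_eventuallyEq hev.symm).unique hpoly

end Euler
section Keys

open Filter Topology

variable {n : ℕ} (fc : Chart n) {p : Pt n}

lemma euler_spray (hp : p ∈ fc.U) (k : Fin n) :
    ∑ i, p.2 i * fc.N i k p = 2 * fc.spray k p := by
  have h := euler_general fc (k := 2) hp (spray_diffAt fc hp k)
    (fun t ht hpt => homog_spray fc hp ht hpt k)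
  have hsum : fderiv ℝ (fc.spray k) p (((0 : Fin n → ℝ), p.2))
      = ∑ i, p.2 i * fc.N i k p := by
    rw [snd_eq_sum, map_sum]
    refine Finset.sum_congr rfl fun i _ => ?_
    rw [map_smul, smul_eq_mul, fc.Ndef i k p hp]
    rfl
  rw [hsum] at h
  simpa using h

lemma K1 (hp : p ∈ fc.U) (m k : Fin n) :
    ∑ i, p.2 i * fderiv ℝ (fc.N i k) p (ey m) = fc.N m k p := by
  have hNd : ∀ i, DifferentiableAt ℝ (fc.N i k) p :=
    fun i => diffAt_of_on fc (fc.Nsmooth i k) hp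
  have hφ : HasFDerivAt (fun q : Pt n => ∑ i, q.2 i * fc.N i k q)
      (∑ i, (p.2 i • fderiv ℝ (fc.N i k) p + fc.N i k p • cy i)) p :=
    HasFDerivAt.fun_sum fun i _ => (cy i).hasFDerivAt.mul (hNd i).hasFDerivAt
  have hD : HasFDerivAt (fun q : Pt n => (∑ i, q.2 i * fc.N i k q) - 2 * fc.spray k q)
      ((∑ i, (p.2 i • fderiv ℝ (fc.N i k) p + fc.N i k p • cy i))
        - (2:ℝ) • fderiv ℝ (fc.spray k) p) p :=
    hφ.sub ((spray_diffAt fc hp k).hasFDerivAt.const_mul 2)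
  have hzero : (fun q : Pt n => (∑ i, q.2 i * fc.N i k q) - 2 * fc.spray k q)
      =ᶠ[𝓝 p] (fun _ => (0:ℝ)) := by
    filter_upwards [fc.hUopen.mem_nhds hp] with q hq
    rw [euler_spray fc hq k]; ring
  have h0 : (∑ i, (p.2 i • fderiv ℝ (fc.N i k) p + fc.N i k p • cy i))
      - (2:ℝ) • fderiv ℝ (fc.spray k) p = 0 := by
    have h1 := hD.fderiv
    have h2 := Filter.EventuallyEq.fderiv_eq (𝕜 := ℝ) hzero
    rw [h1, fderiv_fun_const] at h2
    simpa using h2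
  have h4 := congrArg (fun L : Pt n →L[ℝ] ℝ => L (ey m)) h0
  simp only [ContinuousLinearMap.sub_apply, ContinuousLinearMap.coe_sum',
    Finset.sum_apply, ContinuousLinearMap.add_apply, ContinuousLinearMap.coe_smul',
    Pi.smul_apply, smul_eq_mul, ContinuousLinearMap.zero_apply, cy_apply] at h4
  have hsingle : ∑ i, fc.N i k p * (ey m : Pt n).2 i = fc.N m k p := by
    simp [ey, Pi.single_apply, mul_ite, Finset.sum_ite_eq]
  have hspray : fderiv ℝ (fc.spray k) p (ey m) = fc.N m k p := (fc.Ndef m k p hp).symm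
  rw [Finset.sum_add_distrib, hsingle, hspray] at h4
  linarith
lemma K2 (hp : p ∈ fc.U) (i k : Fin n) :
    fderiv ℝ (fc.N i k) p (((0 : Fin n → ℝ), p.2)) = fc.N i k p := by
  have h := euler_general fc (k := 1) hp (diffAt_of_on fc (fc.Nsmooth i k) hp)
    (fun t ht hpt => by rw [homog_N fc hp ht hpt i k, pow_one])
  simpa using h

end Keys
section Fields

open Filter Topology

variable {n : ℕ} (fc : Chart n) {p : Pt n} {E : Fin (n-1) → Fin n → Pt n → ℝ} {a : Fin (n-1)}

lemma hasFDerivAt_vb (hEs : ∀ i, DifferentiableAt ℝ (E a i) p) :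
    HasFDerivAt (vb E a)
      ((0 : Pt n →L[ℝ] (Fin n → ℝ)).prod
        (ContinuousLinearMap.pi fun i => fderiv ℝ (E a i) p)) p := by
  refine HasFDerivAt.prodMk (hasFDerivAt_const _ _) ?_
  exact hasFDerivAt_pi.2 fun i => (hEs i).hasFDerivAt

lemma hasFDerivAt_LV :
    HasFDerivAt (LV (n := n))
      ((0 : Pt n →L[ℝ] (Fin n → ℝ)).prod (ContinuousLinearMap.snd ℝ _ _)) p :=
  HasFDerivAt.prodMk (hasFDerivAt_const _ _) hasFDerivAt_snd

lemma hasFDerivAt_XI (hp : p ∈ fc.U) :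
    HasFDerivAt (XI fc)
      ((ContinuousLinearMap.snd ℝ (Fin n → ℝ) (Fin n → ℝ)).prod
        (ContinuousLinearMap.pi fun j =>
          -(∑ i, (p.2 i • fderiv ℝ (fc.N i j) p + fc.N i j p • cy i)))) p := by
  refine HasFDerivAt.prodMk hasFDerivAt_snd ?_
  refine hasFDerivAt_pi.2 fun j => ?_
  exact (HasFDerivAt.fun_sum fun i _ =>
    (cy i).hasFDerivAt.mul (diffAt_of_on fc (fc.Nsmooth i j) hp).hasFDerivAt).neg

lemma hb_eq :
    hb fc E a = fun q => ((fun i => E a i q, fun k => -(∑ i, E a i q * fc.N i k q)) : Pt n) := by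
  funext q
  show Jm fc q (vb E a q) = _
  unfold Jm vb dely
  simp

lemma hasFDerivAt_hb (hp : p ∈ fc.U) (hEs : ∀ i, DifferentiableAt ℝ (E a i) p) :
    HasFDerivAt (hb fc E a)
      ((ContinuousLinearMap.pi fun i => fderiv ℝ (E a i) p).prod
        (ContinuousLinearMap.pi fun k =>
          -(∑ i, (E a i p • fderiv ℝ (fc.N i k) p + fc.N i k p • fderiv ℝ (E a i) p)))) p := by
  rw [hb_eq]
  refine HasFDerivAt.prodMk (hasFDerivAt_pi.2 fun i => (hEs i).hasFDerivAt) ?_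
  refine hasFDerivAt_pi.2 fun k => ?_
  exact (HasFDerivAt.fun_sum fun i _ =>
    (hEs i).hasFDerivAt.mul (diffAt_of_on fc (fc.Nsmooth i k) hp).hasFDerivAt).neg

lemma XI_eq_sum (p : Pt n) : XI fc p = ∑ j, p.2 j • ddx fc j p := by
  refine Prod.ext ?_ ?_
  · rw [Prod.fst_sum]
    funext m
    rw [Finset.sum_apply]
    simp [XI, ddx, Pi.single_apply, mul_ite, Finset.sum_ite_eq]
  · rw [Prod.snd_sum]
    funext m
    rw [Finset.sum_apply]
    simp [XI, ddx, Finset.mul_sum]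

lemma hb_eq_sum (p : Pt n) : hb fc E a p = ∑ i, E a i p • ddx fc i p := by
  rw [hb_eq]
  refine Prod.ext ?_ ?_
  · rw [Prod.fst_sum]
    funext m
    rw [Finset.sum_apply]
    simp [ddx, Pi.single_apply, mul_ite, Finset.sum_ite_eq]
  · rw [Prod.snd_sum]
    funext m
    rw [Finset.sum_apply]
    simp [ddx, Finset.mul_sum]

lemma vb_eq_sum (p : Pt n) : vb E a p = ∑ m, E a m p • (ey m : Pt n) :=
  snd_eq_sum _

end Fields
section Helpers

open Filter Topology

variable {n : ℕ} (fc : Chart n) {p : Pt n} {E : Fin (n-1) → Fin n → Pt n → ℝ} {a : Fin (n-1)}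

lemma DN_LV (hp : p ∈ fc.U) (i k : Fin n) :
    fderiv ℝ (fc.N i k) p (LV p) = fc.N i k p :=
  K2 fc hp i k

lemma sum_DN_vb (hp : p ∈ fc.U) (k : Fin n) :
    ∑ i, p.2 i * fderiv ℝ (fc.N i k) p (vb E a p) = ∑ i, E a i p * fc.N i k p := by
  have h1 : ∀ i, fderiv ℝ (fc.N i k) p (vb E a p)
      = ∑ m, E a m p * fderiv ℝ (fc.N i k) p (ey m) := by
    intro i
    rw [vb_eq_sum, map_sum]
    exact Finset.sum_congr rfl fun m _ => by rw [map_smul, smul_eq_mul]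
  simp only [h1, Finset.mul_sum]
  rw [Finset.sum_comm]
  refine Finset.sum_congr rfl fun m _ => ?_
  have hK := K1 fc hp m k
  calc ∑ i, p.2 i * (E a m p * fderiv ℝ (fc.N i k) p (ey m))
      = E a m p * ∑ i, p.2 i * fderiv ℝ (fc.N i k) p (ey m) := by
        rw [Finset.mul_sum]; exact Finset.sum_congr rfl fun i _ => by ring
    _ = E a m p * fc.N m k p := by rw [hK]

lemma Rc_sum (hp : p ∈ fc.U) (k : Fin n) :
    ∑ i, ∑ j, E a i p * p.2 j * Rc fc i j k p
      = (∑ i, E a i p * fderiv ℝ (fc.N i k) p (XI fc p))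
        - ∑ j, p.2 j * fderiv ℝ (fc.N j k) p (hb fc E a p) := by
  have hXI : ∀ i, fderiv ℝ (fc.N i k) p (XI fc p)
      = ∑ j, p.2 j * fderiv ℝ (fc.N i k) p (ddx fc j p) := fun i => by
    rw [XI_eq_sum, map_sum]
    exact Finset.sum_congr rfl fun j _ => by rw [map_smul, smul_eq_mul]
  have hhb : ∀ j, fderiv ℝ (fc.N j k) p (hb fc E a p)
      = ∑ i, E a i p * fderiv ℝ (fc.N j k) p (ddx fc i p) := fun j => by
    rw [hb_eq_sum, map_sum]
    exact Finset.sum_congr rfl fun i _ => by rw [map_smul, smul_eq_mul]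
  simp only [Rc, Dv, hXI, hhb, mul_sub, Finset.sum_sub_distrib, Finset.mul_sum]
  congr 1
  · refine Finset.sum_congr rfl fun i _ => Finset.sum_congr rfl fun j _ => by ring
  · rw [Finset.sum_comm]
    refine Finset.sum_congr rfl fun j _ => Finset.sum_congr rfl fun i _ => by ring

end Helpers
/-- Lie brackets of the adapted frame fields:
`[∂̄/∂̄y^a, ξ] = δ̄/δ̄x^a − (ξ(E_a^j) + E_a^i G_i^j) ∂/∂y^j`,
`[∂̄/∂̄y^a, L] = ∂̄/∂̄y^a − L(E_a^i) ∂/∂y^i`,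
`[δ̄/δ̄x^a, L] = −L(E_a^i) δ/δx^i`,
`[δ̄/δ̄x^a, ξ] = −(E_a^i G_i^j + ξ(E_a^j)) δ/δx^j + E_a^i y^j R^k_{ij} ∂/∂y^k`,
and `[ξ, L] = −ξ`, where `R^k_{ij} = δG_i^k/δx^j − δG_j^k/δx^i`. -/
theorem adapted_frame_lie_brackets {n : ℕ} (fc : Chart n)
    (E : Fin (n-1) → Fin n → Pt n → ℝ) (hE : IsAdaptedFrame fc E) :
    ∀ p ∈ fc.U, ∀ a : Fin (n-1),
      (lie (vb E a) (XI fc) p =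
        hb fc E a p -
          ∑ j, (Dv (XI fc) (E a j) p + ∑ i, E a i p * fc.N i j p) • (ey j : Pt n)) ∧
      (lie (vb E a) LV p = vb E a p - ∑ i, Dv LV (E a i) p • (ey i : Pt n)) ∧
      (lie (hb fc E a) LV p = -(∑ i, Dv LV (E a i) p • ddx fc i p)) ∧
      (lie (hb fc E a) (XI fc) p =
        -(∑ j, ((∑ i, E a i p * fc.N i j p) + Dv (XI fc) (E a j) p) • ddx fc j p)
          + ∑ k, (∑ i, ∑ j, E a i p * p.2 j * Rc fc i j k p) • (ey k : Pt n)) ∧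
      (lie (XI fc) LV p = -(XI fc p)) := by
  intro p hp a
  have hEs : ∀ i, DifferentiableAt ℝ (E a i) p := fun i => diffAt_of_on fc (hE.1 a i) hp
  have hXId := hasFDerivAt_XI fc hp
  have hvbd := hasFDerivAt_vb (E := E) (a := a) (p := p) hEs
  have hLVd := hasFDerivAt_LV (n := n) (p := p)
  have hhbd := hasFDerivAt_hb fc hp hEs
  refine ⟨?_, ?_, ?_, ?_, ?_⟩
  · show fderiv ℝ (XI fc) p (vb E a p) - fderiv ℝ (vb E a) p (XI fc p)
        = hb fc E a p - ∑ j, (Dv (XI fc) (E a j) p + ∑ i, E a i p * fc.N i j p) • (ey j : Pt n)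
    rw [hXId.fderiv, hvbd.fderiv, hb_eq]
    refine Prod.ext ?_ ?_
    · funext j
      simp [vb, ey, Prod.fst_sub, Prod.fst_sum, Prod.smul_fst]
    · funext k
      simp only [Prod.snd_sub, Prod.snd_sum, ContinuousLinearMap.prod_apply, Pi.sub_apply,
        ContinuousLinearMap.pi_apply, ContinuousLinearMap.neg_apply,
        ContinuousLinearMap.coe_sum', Finset.sum_apply, ContinuousLinearMap.add_apply,
        ContinuousLinearMap.coe_smul', Pi.smul_apply, smul_eq_mul, cy_apply,
        ContinuousLinearMap.zero_apply, ContinuousLinearMap.coe_snd', Pi.neg_apply,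
        Prod.smul_snd, vb, ey, Dv, Pi.single_apply, mul_ite, mul_one, mul_zero,
        Finset.sum_ite_eq, Finset.mem_univ, if_true]
      have hsum : ∑ i, p.2 i * fderiv ℝ (fc.N i k) p (((0:Fin n → ℝ), fun i => E a i p) : Pt n)
          = ∑ i, E a i p * fc.N i k p := sum_DN_vb fc hp k
      rw [Finset.sum_add_distrib, hsum]
      have hc : ∑ i, fc.N i k p * E a i p = ∑ i, E a i p * fc.N i k p :=
        Finset.sum_congr rfl fun i _ => mul_comm _ _
      rw [hc]
      ring
  · show fderiv ℝ LV p (vb E a p) - fderiv ℝ (vb E a) p (LV p)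
        = vb E a p - ∑ i, Dv LV (E a i) p • (ey i : Pt n)
    rw [hLVd.fderiv, hvbd.fderiv]
    refine Prod.ext ?_ ?_
    · funext j
      simp [vb, ey, Prod.fst_sub, Prod.fst_sum, Prod.smul_fst]
    · funext m
      simp [vb, ey, LV, Dv, Prod.snd_sub, Prod.snd_sum, Prod.smul_snd,
        Pi.single_apply, mul_ite, Finset.sum_ite_eq]
  · show fderiv ℝ LV p (hb fc E a p) - fderiv ℝ (hb fc E a) p (LV p)
        = -(∑ i, Dv LV (E a i) p • ddx fc i p)
    rw [hLVd.fderiv, hhbd.fderiv, hb_eq]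
    refine Prod.ext ?_ ?_
    · funext j
      simp [ddx, Dv, Prod.fst_neg, Prod.fst_sub, Prod.fst_sum, Prod.smul_fst,
        Pi.single_apply, mul_ite, Finset.sum_ite_eq]
    · funext k
      simp only [Prod.snd_sub, Prod.snd_sum, Prod.snd_neg, ContinuousLinearMap.prod_apply,
        Pi.sub_apply, Pi.neg_apply, ContinuousLinearMap.pi_apply,
        ContinuousLinearMap.neg_apply, ContinuousLinearMap.coe_sum', Finset.sum_apply,
        ContinuousLinearMap.add_apply, ContinuousLinearMap.coe_smul', Pi.smul_apply,
        smul_eq_mul, ContinuousLinearMap.zero_apply, ContinuousLinearMap.coe_snd',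
        ddx, Dv, LV, Prod.smul_snd]
      have hK : ∀ x, (fderiv ℝ (fc.N x k) p) (((0:Fin n → ℝ), p.2) : Pt n) = fc.N x k p :=
        fun x => K2 fc hp x k
      simp only [hK]
      rw [Finset.sum_add_distrib]
      ring_nf
      rw [(Finset.sum_neg_distrib _).symm]
      exact Finset.sum_congr rfl fun i _ => by ring
  · show fderiv ℝ (XI fc) p (hb fc E a p) - fderiv ℝ (hb fc E a) p (XI fc p)
        = -(∑ j, ((∑ i, E a i p * fc.N i j p) + Dv (XI fc) (E a j) p) • ddx fc j p)
          + ∑ k, (∑ i, ∑ j, E a i p * p.2 j * Rc fc i j k p) • (ey k : Pt n)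
    rw [hXId.fderiv, hhbd.fderiv]
    simp only [Rc_sum fc hp]
    have hhb1 : ∀ j, (hb fc E a p).1 j = E a j p := fun j => by simp [hb_eq]
    have hhb2 : ∀ i, (hb fc E a p).2 i = -(∑ m, E a m p * fc.N m i p) := fun i => by
      simp [hb_eq]
    refine Prod.ext ?_ ?_
    · funext j
      simp only [Prod.fst_sub, Prod.fst_sum, Prod.fst_neg, ContinuousLinearMap.prod_apply,
        Pi.sub_apply, Pi.neg_apply, ContinuousLinearMap.pi_apply, ContinuousLinearMap.coe_snd',
        Finset.sum_apply, Prod.smul_fst, Prod.fst_add, Prod.snd_add, smul_eq_mul, Dv, ddx, ey, Pi.smul_apply,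
        Pi.single_apply, mul_ite, mul_one, mul_zero, Finset.sum_ite_eq, Finset.mem_univ,
        if_true, hhb2]
      simp only [smul_zero, Finset.sum_const_zero, add_zero, Pi.neg_apply, Finset.sum_apply,
        Pi.smul_apply, Pi.single_apply, smul_eq_mul, mul_ite, mul_one, mul_zero,
        Finset.sum_ite_eq, Finset.mem_univ, if_true]
      ring
    · funext k
      simp only [Prod.snd_sub, Prod.snd_sum, Prod.snd_neg, ContinuousLinearMap.prod_apply,
        Pi.sub_apply, Pi.neg_apply, ContinuousLinearMap.pi_apply,
        ContinuousLinearMap.neg_apply, ContinuousLinearMap.coe_sum', Finset.sum_apply,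
        ContinuousLinearMap.add_apply, ContinuousLinearMap.coe_smul', Pi.smul_apply,
        smul_eq_mul, cy_apply, ContinuousLinearMap.zero_apply, ContinuousLinearMap.coe_snd',
        Dv, ddx, ey, Prod.smul_snd, Prod.fst_add, Prod.snd_add, Pi.add_apply,
        Pi.single_apply, mul_ite, mul_one, mul_zero,
        Finset.sum_ite_eq, Finset.mem_univ, if_true, hhb2]
      ring_nf
      have c1 : ∑ x, (p.2 x * (fderiv ℝ (fc.N x k) p) (hb fc E a p)
            - fc.N x k p * ∑ x_1, E a x_1 p * fc.N x_1 x p)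
          = (∑ x, p.2 x * (fderiv ℝ (fc.N x k) p) (hb fc E a p))
            - ∑ x, fc.N x k p * ∑ x_1, E a x_1 p * fc.N x_1 x p :=
        Finset.sum_sub_distrib _ _
      have c2 : ∑ x, (E a x p * (fderiv ℝ (fc.N x k) p) (XI fc p)
            + fc.N x k p * (fderiv ℝ (E a x) p) (XI fc p))
          = (∑ x, E a x p * (fderiv ℝ (fc.N x k) p) (XI fc p))
            + ∑ x, fc.N x k p * (fderiv ℝ (E a x) p) (XI fc p) :=
        Finset.sum_add_distrib
      have c3 : ∑ x, -((∑ i, E a i p * fc.N i x p + (fderiv ℝ (E a x) p) (XI fc p)) * fc.N x k p)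
          = -(∑ x, fc.N x k p * ∑ x_1, E a x_1 p * fc.N x_1 x p)
            - ∑ x, fc.N x k p * (fderiv ℝ (E a x) p) (XI fc p) := by
        have e := Finset.sum_congr rfl (fun x (_ : x ∈ Finset.univ) => (by ring :
          -((∑ i, E a i p * fc.N i x p + (fderiv ℝ (E a x) p) (XI fc p)) * fc.N x k p)
            = -(fc.N x k p * ∑ x_1, E a x_1 p * fc.N x_1 x p)
              + -(fc.N x k p * (fderiv ℝ (E a x) p) (XI fc p))))
        rw [e, Finset.sum_add_distrib, Finset.sum_neg_distrib, Finset.sum_neg_distrib]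
        ring
      have c3' : ∑ x, (-((∑ x_1, E a x_1 p * fc.N x_1 x p) * fc.N x k p)
            - (fderiv ℝ (E a x) p) (XI fc p) * fc.N x k p)
          = ∑ x, -((∑ i, E a i p * fc.N i x p + (fderiv ℝ (E a x) p) (XI fc p)) * fc.N x k p) :=
        Finset.sum_congr rfl fun x _ => by ring
      rw [c1, c2, c3', c3]
      ring
  · show fderiv ℝ LV p (XI fc p) - fderiv ℝ (XI fc) p (LV p) = -(XI fc p)
    rw [hLVd.fderiv, hXId.fderiv]
    refine Prod.ext ?_ ?_
    · simp [XI, LV]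
    · funext k
      simp only [Prod.snd_sub, ContinuousLinearMap.prod_apply, Pi.sub_apply,
        ContinuousLinearMap.pi_apply, ContinuousLinearMap.neg_apply,
        ContinuousLinearMap.coe_sum', Finset.sum_apply, ContinuousLinearMap.add_apply,
        ContinuousLinearMap.coe_smul', Pi.smul_apply, smul_eq_mul, cy_apply,
        ContinuousLinearMap.zero_apply, ContinuousLinearMap.coe_snd']
      have hK : ∀ x, (fderiv ℝ (fc.N x k) p) (((0:Fin n → ℝ), p.2) : Pt n) = fc.N x k p :=
        fun x => K2 fc hp x k
      simp only [XI, LV, hK, Prod.snd_neg, Pi.neg_apply, neg_neg]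
      rw [Finset.sum_add_distrib]
      ring_nf
      exact Finset.sum_congr rfl fun i _ => mul_comm _ _

end FinslerFoliations

end
end

section
/- The Sasaki lifted metric G on the tangent bundle TM of a Finsler manifold (M,F) is bundle-like for the foliation V^⊥TM (the distribution G-orthogonal to the vertical Liouville vector field L in TTM); that is, G(∇_L L, X) + G(∇_L L, X) = 0 for all sections X of V^⊥TM, where ∇ is the Levi-Civita connection of G. -/
/-!
A local-coordinate framework for the geometry of the tangent bundle `TM` of an
`n`-dimensional Finsler manifold `(M, F)`, following the paper
"A frame on tangent bundle of a Finsler manifold and the natural foliations".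

All geometric objects are described through their components on a chart domain
`U` of `TM` (avoiding the zero section): a point `p : Pt n` is the pair of
coordinates `(x^i, y^i)`, and a vector field on `TM` is given by its
components in the natural frame `(∂/∂x^i, ∂/∂y^i)`.
-/

open scoped BigOperators

noncomputable section

namespace FinslerFoliations

variable {n : ℕ}

variable (fc : Chart n)

def scl (t : ℝ) : Pt n →L[ℝ] Pt n :=
  (ContinuousLinearMap.fst ℝ (Fin n → ℝ) (Fin n → ℝ)).prod
    (t • ContinuousLinearMap.snd ℝ (Fin n → ℝ) (Fin n → ℝ))

@[simp] lemma scl_apply (t : ℝ) (q : Pt n) : scl t q = (q.1, t • q.2) := rfl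

def Homog (U : Set (Pt n)) (m : ℕ) (h : Pt n → ℝ) : Prop :=
  ∀ q ∈ U, ∀ t : ℝ, 0 < t → (q.1, t • q.2) ∈ U → h (q.1, t • q.2) = t ^ m * h q

lemma Homog.congr {U : Set (Pt n)} {m : ℕ} {h h' : Pt n → ℝ} (hh : Homog U m h)
    (he : ∀ q ∈ U, h q = h' q) : Homog U m h' := by
  intro q hq t ht htq
  rw [← he _ hq, ← he _ htq]
  exact hh q hq t ht htq

lemma Homog.euler {U : Set (Pt n)} (hU : IsOpen U) {m : ℕ} {h : Pt n → ℝ}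
    (hh : Homog U m h) {p : Pt n} (hp : p ∈ U) (hd : DifferentiableAt ℝ h p) :
    fderiv ℝ h p (0, p.2) = m * h p := by
  have hγ : HasDerivAt (fun t : ℝ => ((p.1, t • p.2) : Pt n)) ((0 : Fin n → ℝ), p.2) 1 :=
    (hasDerivAt_const (1:ℝ) p.1).prodMk (by simpa using (hasDerivAt_id (1:ℝ)).smul_const p.2)
  have hone : ((p.1, (1:ℝ) • p.2) : Pt n) = p := by simp
  have h1 : HasDerivAt (fun t : ℝ => h (p.1, t • p.2)) (fderiv ℝ h p (0, p.2)) 1 := by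
    have hfd : HasFDerivAt h (fderiv ℝ h p) ((p.1, (1:ℝ) • p.2) : Pt n) := by
      rw [hone]; exact hd.hasFDerivAt
    exact hfd.comp_hasDerivAt 1 hγ
  have h2 : HasDerivAt (fun t : ℝ => t ^ m * h p) ((m * 1 ^ (m - 1)) * h p) 1 :=
    (hasDerivAt_pow m 1).mul_const _
  have hev : (fun t : ℝ => h (p.1, t • p.2)) =ᶠ[nhds 1] fun t => t ^ m * h p := by
    have hcont : Continuous fun t : ℝ => ((p.1, t • p.2) : Pt n) :=
      continuous_const.prodMk (continuous_id.smul continuous_const)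
    have hmem : ∀ᶠ t in nhds (1:ℝ), ((p.1, t • p.2) : Pt n) ∈ U := by
      have : (1:ℝ) ∈ (fun t : ℝ => ((p.1, t • p.2) : Pt n)) ⁻¹' U := by
        simpa [hone] using hp
      exact (hU.preimage hcont).mem_nhds this
    filter_upwards [hmem, eventually_gt_nhds one_pos] with t h1 h2 using hh p hp t h2 h1
  have := (h1.congr_of_eventuallyEq hev.symm).unique h2
  simpa using this

lemma Homog.fderiv_dir {U : Set (Pt n)} (hU : IsOpen U) {m : ℕ} {h : Pt n → ℝ}
    (hh : Homog U m h) (hd : ∀ q ∈ U, DifferentiableAt ℝ h q) (w : Pt n) {q : Pt n}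
    (hq : q ∈ U) {t : ℝ} (ht : 0 < t) (hts : (q.1, t • q.2) ∈ U) :
    fderiv ℝ h (q.1, t • q.2) (w.1, t • w.2) = t ^ m * fderiv ℝ h q w := by
  have hV : IsOpen (U ∩ (scl t) ⁻¹' U) := hU.inter (hU.preimage (scl t).continuous)
  have hqV : q ∈ U ∩ (scl t) ⁻¹' U := ⟨hq, by simpa using hts⟩
  have hev : (fun r => h (scl t r)) =ᶠ[nhds q] fun r => t ^ m * h r := by
    filter_upwards [hV.mem_nhds hqV] with r hr using hh r hr.1 t ht hr.2
  have hL : HasFDerivAt (fun r => h (scl t r)) ((fderiv ℝ h (scl t q)).comp (scl t)) q :=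
    ((hd _ hts).hasFDerivAt).comp q (scl t).hasFDerivAt
  have hR : HasFDerivAt (fun r => t ^ m * h r) ((t ^ m) • fderiv ℝ h q) q :=
    ((hd q hq).hasFDerivAt).const_mul (t ^ m)
  have hEq := (hL.congr_of_eventuallyEq hev.symm).unique hR
  have := congrFun (congrArg (DFunLike.coe) hEq) w
  simpa using this

lemma Homog.fderiv_x {U : Set (Pt n)} (hU : IsOpen U) {m : ℕ} {h : Pt n → ℝ}
    (hh : Homog U m h) (hd : ∀ q ∈ U, DifferentiableAt ℝ h q) (u : Fin n → ℝ) :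
    Homog U m (fun q => fderiv ℝ h q (u, 0)) := by
  intro q hq t ht hts
  have := hh.fderiv_dir hU hd (u, 0) hq ht hts
  simpa [smul_zero] using this

lemma Homog.fderiv_y {U : Set (Pt n)} (hU : IsOpen U) {m : ℕ} {h : Pt n → ℝ}
    (hh : Homog U (m + 1) h) (hd : ∀ q ∈ U, DifferentiableAt ℝ h q) (u : Fin n → ℝ) :
    Homog U m (fun q => fderiv ℝ h q (0, u)) := by
  intro q hq t ht hts
  have h1 := hh.fderiv_dir hU hd (0, u) hq ht hts
  have h2 : fderiv ℝ h (q.1, t • q.2) ((0:Fin n → ℝ), t • u)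
      = t * fderiv ℝ h (q.1, t • q.2) (0, u) := by
    have : ((0:Fin n → ℝ), t • u) = t • (((0:Fin n → ℝ), u) : Pt n) := by
      simp [Prod.smul_def]
    rw [this, map_smul]; rfl
  rw [h2] at h1
  refine mul_left_cancel₀ (ne_of_gt ht) (h1.trans ?_)
  ring

lemma contDiffOn_fderiv_apply {U : Set (Pt n)} (hU : IsOpen U) {h : Pt n → ℝ}
    (hh : ContDiffOn ℝ (⊤:ℕ∞) h U) (v : Pt n) :
    ContDiffOn ℝ (⊤:ℕ∞) (fun q => fderiv ℝ h q v) U :=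
  (hh.fderiv_of_isOpen hU (by simp)).clm_apply contDiffOn_const


/-! ### Auxiliary analytic layer -/

/-- the energy function `E = F²`. -/
def Ef : Pt n → ℝ := fun q => fc.F q ^ 2

/-- `∂E/∂y^i`. -/
def Eyf (i : Fin n) : Pt n → ℝ := pd (ey i) (Ef fc)

/-- `∂E/∂x^k`. -/
def Exf (k : Fin n) : Pt n → ℝ := pd (ex k) (Ef fc)

/-- `A_j = ∂²E/∂y^j∂x^k y^k − ∂E/∂x^j`. -/
def Af (j : Fin n) : Pt n → ℝ :=
  fun q => (∑ k, pd (ey j) (Exf fc k) q * q.2 k) - Exf fc j q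

lemma hEs : ContDiffOn ℝ (⊤:ℕ∞) (Ef fc) fc.U := fc.Fsmooth.pow 2

lemma hEys (i : Fin n) : ContDiffOn ℝ (⊤:ℕ∞) (Eyf fc i) fc.U :=
  contDiffOn_fderiv_apply fc.hUopen (hEs fc) (ey i)

lemma hExs (k : Fin n) : ContDiffOn ℝ (⊤:ℕ∞) (Exf fc k) fc.U :=
  contDiffOn_fderiv_apply fc.hUopen (hEs fc) (ex k)

lemma diffat {h : Pt n → ℝ} (hs : ContDiffOn ℝ (⊤:ℕ∞) h fc.U) {p : Pt n} (hp : p ∈ fc.U) :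
    DifferentiableAt ℝ h p :=
  ((hs.differentiableOn (by simp)).differentiableAt (fc.hUopen.mem_nhds hp))

lemma hAs (j : Fin n) : ContDiffOn ℝ (⊤:ℕ∞) (Af fc j) fc.U := by
  apply ContDiffOn.sub
  · apply ContDiffOn.sum
    intro k _
    exact (contDiffOn_fderiv_apply fc.hUopen (hExs fc k) (ey j)).mul
      (((ContinuousLinearMap.proj (R := ℝ) (φ := fun _ : Fin n => ℝ) k).comp
        (ContinuousLinearMap.snd ℝ (Fin n → ℝ) (Fin n → ℝ))).contDiff.contDiffOn)
  · exact hExs fc j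

lemma hEhom : Homog fc.U 2 (Ef fc) := by
  intro q hq t ht hts
  have := fc.Fhomog q hq t ht hts
  simp only [Ef]
  rw [this]; ring

lemma hEyhom (i : Fin n) : Homog fc.U 1 (Eyf fc i) :=
  (hEhom fc).fderiv_y fc.hUopen (fun q hq => diffat fc (hEs fc) hq) (Pi.single i 1)

lemma hExhom (k : Fin n) : Homog fc.U 2 (Exf fc k) :=
  (hEhom fc).fderiv_x fc.hUopen (fun q hq => diffat fc (hEs fc) hq) (Pi.single k 1)

lemma hExyhom (k j : Fin n) : Homog fc.U 1 (fun q => pd (ey j) (Exf fc k) q) :=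
  (hExhom fc k).fderiv_y fc.hUopen (fun q hq => diffat fc (hExs fc k) hq) (Pi.single j 1)

lemma hghom (i j : Fin n) : Homog fc.U 0 (fc.g i j) := by
  have h0 : Homog fc.U 0 (fun q => pd (ey i) (Eyf fc j) q) :=
    (hEyhom fc j).fderiv_y fc.hUopen (fun q hq => diffat fc (hEys fc j) hq) (Pi.single i 1)
  have h1 : Homog fc.U 0 (fun q => (1/2 : ℝ) * pd (ey i) (Eyf fc j) q) := by
    intro q hq t ht hts
    show (1/2 : ℝ) * pd (ey i) (Eyf fc j) (q.1, t • q.2)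
        = t ^ 0 * ((1/2 : ℝ) * pd (ey i) (Eyf fc j) q)
    have := h0 q hq t ht hts
    simp only at this
    rw [this]; ring
  exact h1.congr (fun q hq => (fc.gdef i j q hq).symm)

lemma eulerE {p : Pt n} (hp : p ∈ fc.U) : fderiv ℝ (Ef fc) p (0, p.2) = 2 * Ef fc p := by
  simpa using (hEhom fc).euler fc.hUopen hp (diffat fc (hEs fc) hp)

lemma eulerEy (i : Fin n) {p : Pt n} (hp : p ∈ fc.U) :
    fderiv ℝ (Eyf fc i) p (0, p.2) = Eyf fc i p := by
  simpa using (hEyhom fc i).euler fc.hUopen hp (diffat fc (hEys fc i) hp)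

lemma eulerEx (k : Fin n) {p : Pt n} (hp : p ∈ fc.U) :
    fderiv ℝ (Exf fc k) p (0, p.2) = 2 * Exf fc k p := by
  simpa using (hExhom fc k).euler fc.hUopen hp (diffat fc (hExs fc k) hp)

/-- symmetry of the second `y`-derivatives of `E`. -/
lemma symEyy (i j : Fin n) {p : Pt n} (hp : p ∈ fc.U) :
    fderiv ℝ (Eyf fc j) p (ey i) = fderiv ℝ (Eyf fc i) p (ey j) := by
  have hct : ContDiffAt ℝ (⊤:ℕ∞) (Ef fc) p := (hEs fc).contDiffAt (fc.hUopen.mem_nhds hp)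
  have hsym : IsSymmSndFDerivAt ℝ (Ef fc) p := hct.isSymmSndFDerivAt (by rw [minSmoothness_of_isRCLikeNormedField]; exact WithTop.coe_le_coe.mpr (le_top : (2:ℕ∞) ≤ ⊤))
  have hd1 : DifferentiableAt ℝ (fderiv ℝ (Ef fc)) p :=
    (hct.fderiv_right (m := (⊤:ℕ∞)) (le_of_eq rfl)).differentiableAt (by simp)
  have key : ∀ v w : Pt n, fderiv ℝ (fun q => fderiv ℝ (Ef fc) q v) p w
      = fderiv ℝ (fderiv ℝ (Ef fc)) p w v := by
    intro v w
    rw [fderiv_clm_apply hd1 (differentiableAt_const v)]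
    simp
  show fderiv ℝ (fun q => fderiv ℝ (Ef fc) q (ey j)) p (ey i)
      = fderiv ℝ (fun q => fderiv ℝ (Ef fc) q (ey i)) p (ey j)
  rw [key, key, hsym (ey i) (ey j)]

/-! ### vertical decomposition, `g`-identities -/

lemma Eyf_apply (i : Fin n) (q : Pt n) : Eyf fc i q = fderiv ℝ (Ef fc) q (ey i) := rfl
lemma Exf_apply (k : Fin n) (q : Pt n) : Exf fc k q = fderiv ℝ (Ef fc) q (ex k) := rfl

lemma vert_decomp (L : Pt n →L[ℝ] ℝ) (v : Fin n → ℝ) :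
    L ((0 : Fin n → ℝ), v) = ∑ j, v j * L (ey j) := by
  have hv : (((0 : Fin n → ℝ), v) : Pt n) = ∑ j, v j • ey j := by
    apply Prod.ext
    · rw [Prod.fst_sum]; simp [ey]
    · rw [Prod.snd_sum]
      funext k
      simp [ey, Finset.sum_apply, Pi.single_apply]
  rw [hv, map_sum]
  exact Finset.sum_congr rfl fun j _ => by rw [map_smul]; rfl

lemma gy {p : Pt n} (hp : p ∈ fc.U) (i : Fin n) :
    ∑ j, fc.g i j p * p.2 j = (1/2) * Eyf fc i p := by
  have h1 : ∀ j : Fin n, fc.g i j p = (1/2) * fderiv ℝ (Eyf fc j) p (ey i) :=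
    fun j => fc.gdef i j p hp
  calc ∑ j, fc.g i j p * p.2 j
      = (1/2) * ∑ j, p.2 j * fderiv ℝ (Eyf fc i) p (ey j) := by
        rw [Finset.mul_sum]
        refine Finset.sum_congr rfl fun j _ => ?_
        rw [h1 j, symEyy fc i j hp]; ring
    _ = (1/2) * fderiv ℝ (Eyf fc i) p (0, p.2) := by rw [vert_decomp]
    _ = (1/2) * Eyf fc i p := by rw [eulerEy fc i hp]

lemma gy' {p : Pt n} (hp : p ∈ fc.U) (j : Fin n) :
    ∑ i, fc.g i j p * p.2 i = (1/2) * Eyf fc j p := by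
  rw [← gy fc hp j]
  exact Finset.sum_congr rfl fun i _ => by rw [fc.gsymm i j p hp]

lemma Eid {q : Pt n} (hq : q ∈ fc.U) :
    ∑ i, ∑ j, fc.g i j q * q.2 i * q.2 j = Ef fc q := by
  have h1 : ∀ i : Fin n, ∑ j, fc.g i j q * q.2 i * q.2 j
      = q.2 i * ((1/2) * Eyf fc i q) := by
    intro i
    rw [← gy fc hq i, Finset.mul_sum]
    exact Finset.sum_congr rfl fun j _ => by ring
  rw [Finset.sum_congr rfl fun i _ => h1 i]
  have h2 : ∑ i, q.2 i * ((1/2) * Eyf fc i q)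
      = (1/2) * ∑ i, q.2 i * fderiv ℝ (Ef fc) q (ey i) := by
    rw [Finset.mul_sum]
    refine Finset.sum_congr rfl fun i _ => ?_
    rw [Eyf_apply]; ring
  rw [h2, ← vert_decomp (fderiv ℝ (Ef fc) q) q.2, eulerE fc hq]
  ring

/-! ### the inverse metric and spray -/

def Mg (q : Pt n) : Matrix (Fin n) (Fin n) ℝ := Matrix.of fun i j => fc.g i j q

lemma hMgmul {q : Pt n} (hq : q ∈ fc.U) :
    Mg fc q * (Matrix.of fun i j => fc.ginv i j q) = 1 := by
  ext i j
  simpa [Matrix.mul_apply, Mg, Matrix.one_apply] using fc.hginv i j q hq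

lemma hginv_eq {q : Pt n} (hq : q ∈ fc.U) (i j : Fin n) :
    fc.ginv i j q = (Mg fc q)⁻¹ i j := by
  rw [Matrix.inv_eq_right_inv (hMgmul fc hq)]; rfl

lemma hdet_ne {q : Pt n} (hq : q ∈ fc.U) : (Mg fc q).det ≠ 0 :=
  left_ne_zero_of_mul_eq_one
    (by rw [← Matrix.det_mul, hMgmul fc hq, Matrix.det_one])

lemma detS {M : Pt n → Matrix (Fin n) (Fin n) ℝ}
    (hM : ∀ i j, ContDiffOn ℝ (⊤:ℕ∞) (fun q => M q i j) fc.U) :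
    ContDiffOn ℝ (⊤:ℕ∞) (fun q => (M q).det) fc.U := by
  simp only [Matrix.det_apply]
  apply ContDiffOn.sum
  intro σ _
  have h1 : ContDiffOn ℝ (⊤:ℕ∞) (fun q => ∏ i, M q (σ i) i) fc.U :=
    contDiffOn_prod fun i _ => hM (σ i) i
  have h2 := (contDiffOn_const (c := ((Equiv.Perm.sign σ : ℤ) : ℝ))).mul h1
  exact h2.congr fun q hq => by simp [Units.smul_def, zsmul_eq_mul]

lemma hMgS (i j : Fin n) : ContDiffOn ℝ (⊤:ℕ∞) (fun q => Mg fc q i j) fc.U :=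
  fc.gsmooth i j

lemma hMgInvS (i j : Fin n) :
    ContDiffOn ℝ (⊤:ℕ∞) (fun q => (Mg fc q)⁻¹ i j) fc.U := by
  have hadj : ContDiffOn ℝ (⊤:ℕ∞) (fun q => (Mg fc q).adjugate i j) fc.U := by
    simp only [Matrix.adjugate_apply]
    apply detS fc
    intro a b
    by_cases hab : a = j
    · subst hab
      have he : (fun q => (Mg fc q).updateRow a (Pi.single i 1) a b)
          = fun _ : Pt n => (Pi.single i 1 : Fin n → ℝ) b := by
        funext q; rw [Matrix.updateRow_self]
      rw [he]; exact contDiffOn_const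
    · refine (hMgS fc a b).congr fun q hq => by simp [Matrix.updateRow_apply, hab]
  have hd := ((detS fc (hMgS fc)).inv (fun q hq => hdet_ne fc hq)).mul hadj
  refine hd.congr fun q hq => ?_
  rw [Matrix.inv_def, Matrix.smul_apply, Ring.inverse_eq_inv', smul_eq_mul]
  rfl

def Phif (i : Fin n) : Pt n → ℝ := fun q => (1/4) * ∑ j, (Mg fc q)⁻¹ i j * Af fc j q

lemma spraydef' (i : Fin n) {q : Pt n} (hq : q ∈ fc.U) :
    fc.spray i q = (1/4) * ∑ j, fc.ginv i j q * Af fc j q :=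
  fc.spraydef i q hq

lemma hsprayPhi (i : Fin n) {q : Pt n} (hq : q ∈ fc.U) :
    fc.spray i q = Phif fc i q := by
  rw [spraydef' fc i hq]
  unfold Phif
  congr 1
  exact Finset.sum_congr rfl fun j _ => by rw [hginv_eq fc hq]

lemma hPhiS (i : Fin n) : ContDiffOn ℝ (⊤:ℕ∞) (Phif fc i) fc.U :=
  contDiffOn_const.mul (ContDiffOn.sum fun j _ => (hMgInvS fc i j).mul (hAs fc j))

lemma hsprayd (i : Fin n) {p : Pt n} (hp : p ∈ fc.U) :
    DifferentiableAt ℝ (fc.spray i) p := by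
  have hev : fc.spray i =ᶠ[nhds p] Phif fc i :=
    Filter.eventuallyEq_of_mem (fc.hUopen.mem_nhds hp) (fun q hq => hsprayPhi fc i hq)
  rw [hev.differentiableAt_iff]
  exact diffat fc (hPhiS fc i) hp

lemma hAhom (j : Fin n) : Homog fc.U 2 (Af fc j) := by
  intro q hq t ht hts
  show (∑ k, pd (ey j) (Exf fc k) (q.1, t • q.2) * ((q.1, t • q.2) : Pt n).2 k)
      - Exf fc j (q.1, t • q.2) = t ^ 2 * ((∑ k, pd (ey j) (Exf fc k) q * q.2 k) - Exf fc j q)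
  have e1 : ∀ k : Fin n, pd (ey j) (Exf fc k) (q.1, t • q.2) * ((q.1, t • q.2) : Pt n).2 k
      = t ^ 2 * (pd (ey j) (Exf fc k) q * q.2 k) := by
    intro k
    have h := hExyhom fc k j q hq t ht hts
    simp only at h
    have h2 : ((q.1, t • q.2) : Pt n).2 k = t * q.2 k := rfl
    rw [h, h2]; ring
  rw [Finset.sum_congr rfl fun k _ => e1 k, ← Finset.mul_sum,
    hExhom fc j q hq t ht hts]
  ring

lemma hsprayhom (i : Fin n) : Homog fc.U 2 (fc.spray i) := by
  intro q hq t ht hts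
  rw [spraydef' fc i hts, spraydef' fc i hq]
  have hginv0 : ∀ j : Fin n, fc.ginv i j (q.1, t • q.2) = fc.ginv i j q := by
    intro j
    rw [hginv_eq fc hts, hginv_eq fc hq]
    have hMg : Mg fc (q.1, t • q.2) = Mg fc q := by
      ext a b
      have h := hghom fc a b q hq t ht hts
      simpa [Mg] using h
    rw [hMg]
  have e1 : ∀ j : Fin n, fc.ginv i j (q.1, t • q.2) * Af fc j (q.1, t • q.2)
      = t ^ 2 * (fc.ginv i j q * Af fc j q) := by
    intro j
    rw [hginv0 j, hAhom fc j q hq t ht hts]; ring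
  rw [Finset.sum_congr rfl fun j _ => e1 j, ← Finset.mul_sum]
  ring

lemma hNhom (k j : Fin n) : Homog fc.U 1 (fc.N k j) := by
  have h := (hsprayhom fc j).fderiv_y fc.hUopen
    (fun q hq => hsprayd fc j hq) (Pi.single k 1)
  exact h.congr (fun q hq => (fc.Ndef k j q hq).symm)

lemma eulerN (k j : Fin n) {p : Pt n} (hp : p ∈ fc.U) :
    fderiv ℝ (fc.N k j) p (0, p.2) = fc.N k j p := by
  simpa using (hNhom fc k j).euler fc.hUopen hp (diffat fc (fc.Nsmooth k j) hp)

lemma step1 (l : Fin n) {q : Pt n} (hq : q ∈ fc.U) :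
    ∑ i, fc.g l i q * fc.spray i q = (1/4) * Af fc l q := by
  have h1 : ∑ i, fc.g l i q * fc.spray i q
      = ∑ i, ∑ j, fc.g l i q * ((1/4) * (fc.ginv i j q * Af fc j q)) := by
    refine Finset.sum_congr rfl fun i _ => ?_
    rw [spraydef' fc i hq, Finset.mul_sum, Finset.mul_sum]
  rw [h1, Finset.sum_comm]
  have h2 : ∀ j : Fin n, ∑ i, fc.g l i q * ((1/4) * (fc.ginv i j q * Af fc j q))
      = (1/4) * Af fc j q * ∑ i, fc.g l i q * fc.ginv i j q := by
    intro j
    rw [Finset.mul_sum]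
    exact Finset.sum_congr rfl fun i _ => by ring
  rw [Finset.sum_congr rfl fun j _ => h2 j]
  have h3 : ∀ j : Fin n, (1/4 : ℝ) * Af fc j q * ∑ i, fc.g l i q * fc.ginv i j q
      = if l = j then (1/4) * Af fc j q else 0 := by
    intro j
    rw [fc.hginv l j q hq]
    by_cases h : l = j <;> simp [h]
  rw [Finset.sum_congr rfl fun j _ => h3 j]
  simp

/-! ### the identity `δE/δx = 0` -/

def Sfn : Pt n → ℝ := fun q => ∑ l, Eyf fc l q * fc.spray l q

def Tfn : Pt n → ℝ := fun q => ∑ m, Exf fc m q * q.2 m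

lemma hST {q : Pt n} (hq : q ∈ fc.U) : Sfn fc q = (1/2) * Tfn fc q := by
  have hEy : ∀ l : Fin n, Eyf fc l q = 2 * ∑ j, fc.g l j q * q.2 j := by
    intro l; rw [gy fc hq l]; ring
  have h1 : ∀ l : Fin n, Eyf fc l q * fc.spray l q
      = ∑ j, 2 * (fc.g l j q * q.2 j * fc.spray l q) := by
    intro l
    calc Eyf fc l q * fc.spray l q
        = 2 * ((∑ j, fc.g l j q * q.2 j) * fc.spray l q) := by rw [hEy l]; ring
      _ = ∑ j, 2 * (fc.g l j q * q.2 j * fc.spray l q) := by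
          rw [Finset.sum_mul, Finset.mul_sum]
          try exact Finset.sum_congr rfl fun j _ => by ring
  have h2 : Sfn fc q = ∑ j, ∑ l, 2 * (fc.g l j q * q.2 j * fc.spray l q) := by
    unfold Sfn
    rw [Finset.sum_congr rfl fun l _ => h1 l, Finset.sum_comm]
  have h3 : ∀ j : Fin n, ∑ l, 2 * (fc.g l j q * q.2 j * fc.spray l q)
      = 2 * q.2 j * ∑ l, fc.g j l q * fc.spray l q := by
    intro j
    rw [Finset.mul_sum]
    refine Finset.sum_congr rfl fun l _ => ?_
    rw [fc.gsymm l j q hq]; ring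
  have h4 : Sfn fc q = ∑ j, (1/2) * (q.2 j * Af fc j q) := by
    rw [h2, Finset.sum_congr rfl fun j _ => h3 j]
    refine Finset.sum_congr rfl fun j _ => ?_
    rw [step1 fc j hq]; ring
  have h5 : ∑ j, q.2 j * Af fc j q = Tfn fc q := by
    have e1 : ∀ j : Fin n, q.2 j * Af fc j q
        = (∑ m, q.2 j * (pd (ey j) (Exf fc m) q * q.2 m)) - q.2 j * Exf fc j q := by
      intro j
      show q.2 j * ((∑ m, pd (ey j) (Exf fc m) q * q.2 m) - Exf fc j q) = _
      rw [mul_sub, Finset.mul_sum]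
    rw [Finset.sum_congr rfl fun j _ => e1 j, Finset.sum_sub_distrib, Finset.sum_comm]
    have e2 : ∀ m : Fin n, ∑ j, q.2 j * (pd (ey j) (Exf fc m) q * q.2 m)
        = q.2 m * (2 * Exf fc m q) := by
      intro m
      have e3 : ∑ j, q.2 j * (pd (ey j) (Exf fc m) q * q.2 m)
          = (∑ j, q.2 j * fderiv ℝ (Exf fc m) q (ey j)) * q.2 m := by
        rw [Finset.sum_mul]
        exact Finset.sum_congr rfl fun j _ => by rw [pd]; ring
      rw [e3, ← vert_decomp (fderiv ℝ (Exf fc m) q) q.2, eulerEx fc m hq]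
      ring
    rw [Finset.sum_congr rfl fun m _ => e2 m]
    have e4 : ∀ j : Fin n, q.2 j * Exf fc j q = Exf fc j q * q.2 j := fun j => by ring
    rw [Finset.sum_congr rfl fun j _ => e4 j]
    show ∑ m, q.2 m * (2 * Exf fc m q) - Tfn fc q = Tfn fc q
    have e5 : ∑ m, q.2 m * (2 * Exf fc m q) = 2 * Tfn fc q := by
      unfold Tfn
      rw [Finset.mul_sum]
      exact Finset.sum_congr rfl fun m _ => by ring
    rw [e5]; ring
  rw [h4]
  rw [show (∑ j, (1/2 : ℝ) * (q.2 j * Af fc j q)) = (1/2) * ∑ j, q.2 j * Af fc j q by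
    rw [Finset.mul_sum], h5]

/-- the projected coordinate map `q ↦ q.2 m` as a continuous linear map. -/
def prm (m : Fin n) : Pt n →L[ℝ] ℝ :=
  (ContinuousLinearMap.proj (R := ℝ) (φ := fun _ : Fin n => ℝ) m).comp
    (ContinuousLinearMap.snd ℝ (Fin n → ℝ) (Fin n → ℝ))

lemma Dprime (k : Fin n) {p : Pt n} (hp : p ∈ fc.U) :
    ∑ l, Eyf fc l p * fc.N k l p = Exf fc k p := by
  have hSd : HasFDerivAt (Sfn fc)
      (∑ l, (Eyf fc l p • fderiv ℝ (fc.spray l) p + fc.spray l p • fderiv ℝ (Eyf fc l) p)) p := by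
    apply HasFDerivAt.fun_sum
    intro l _
    exact (diffat fc (hEys fc l) hp).hasFDerivAt.mul ((hsprayd fc l hp).hasFDerivAt)
  have hTd : HasFDerivAt (fun q => (1/2 : ℝ) * Tfn fc q)
      ((1/2 : ℝ) • ∑ m, (Exf fc m p • (prm m) + p.2 m • fderiv ℝ (Exf fc m) p)) p := by
    apply HasFDerivAt.const_mul
    apply HasFDerivAt.fun_sum
    intro m _
    exact (diffat fc (hExs fc m) hp).hasFDerivAt.mul ((prm m).hasFDerivAt)
  have hfe : fderiv ℝ (Sfn fc) p = fderiv ℝ (fun q => (1/2 : ℝ) * Tfn fc q) p :=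
    Filter.EventuallyEq.fderiv_eq
      (Filter.eventuallyEq_of_mem (fc.hUopen.mem_nhds hp) fun q hq => hST fc hq)
  have hEqD := (hSd.fderiv.symm.trans hfe).trans hTd.fderiv
  have happ := congrFun (congrArg DFunLike.coe hEqD) (ey k)
  simp only [ContinuousLinearMap.sum_apply, ContinuousLinearMap.add_apply,
    ContinuousLinearMap.coe_smul', Pi.smul_apply, smul_eq_mul] at happ
  have hNk : ∀ l : Fin n, fderiv ℝ (fc.spray l) p (ey k) = fc.N k l p :=
    fun l => (fc.Ndef k l p hp).symm
  have hgk : ∀ l : Fin n, fderiv ℝ (Eyf fc l) p (ey k) = 2 * fc.g k l p := by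
    intro l
    have := fc.gdef k l p hp
    rw [this]; ring_nf
    rfl
  have hprm : ∀ m : Fin n, (prm m) (ey k) = (Pi.single k 1 : Fin n → ℝ) m := by
    intro m; rfl
  simp only [hNk, hgk, hprm] at happ
  have hs1 : ∑ l, (Eyf fc l p * fc.N k l p + fc.spray l p * (2 * fc.g k l p))
      = (∑ l, Eyf fc l p * fc.N k l p) + 2 * ∑ l, fc.g k l p * fc.spray l p := by
    rw [Finset.sum_add_distrib, Finset.mul_sum]
    congr 1
    exact Finset.sum_congr rfl fun l _ => by ring
  have hs2 : ∑ m, (Exf fc m p * (Pi.single k 1 : Fin n → ℝ) m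
        + p.2 m * fderiv ℝ (Exf fc m) p (ey k))
      = Exf fc k p + (Af fc k p + Exf fc k p) := by
    rw [Finset.sum_add_distrib]
    congr 1
    · simp [Pi.single_apply]
    · have : ∑ m, p.2 m * fderiv ℝ (Exf fc m) p (ey k)
          = ∑ m, pd (ey k) (Exf fc m) p * p.2 m :=
        Finset.sum_congr rfl fun m _ => by rw [pd]; ring
      rw [this]
      show _ = Af fc k p + Exf fc k p
      unfold Af
      ring
  rw [hs1, hs2, step1 fc k hp] at happ
  linarith

/-! ### computations with the Sasaki metric -/

lemma Gs_zero_left (p w : Pt n) : Gs fc p 0 w = 0 := by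
  simp [Gs, dely]

lemma dely_neg (i : Fin n) (p a : Pt n) : dely fc i p (-a) = -dely fc i p a := by
  unfold dely
  rw [Prod.snd_neg, Pi.neg_apply]
  rw [show (∑ j, fc.N j i p * (-a).1 j) = -∑ j, fc.N j i p * a.1 j by
    rw [← Finset.sum_neg_distrib]
    exact Finset.sum_congr rfl fun j _ => by rw [Prod.fst_neg, Pi.neg_apply]; ring]
  ring

lemma Gs_neg_left (p a w : Pt n) : Gs fc p (-a) w = -Gs fc p a w := by
  unfold Gs
  rw [← Finset.sum_neg_distrib]
  refine Finset.sum_congr rfl fun i _ => ?_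
  rw [← Finset.sum_neg_distrib]
  refine Finset.sum_congr rfl fun j _ => ?_
  rw [dely_neg, Prod.fst_neg, Pi.neg_apply]
  ring

lemma Gs_ey_LV (k : Fin n) (p : Pt n) :
    Gs fc p (ey k) (LV p) = ∑ j, fc.g k j p * p.2 j := by
  simp [Gs, dely, ey, LV, Pi.single_apply]

lemma gsLVdyv (k : Fin n) (q : Pt n) :
    Gs fc q (LV q) (ey k) = ∑ i, fc.g i k q * q.2 i := by
  simp [Gs, dely, ey, LV, Pi.single_apply]

lemma gsLVLV (q : Pt n) :
    Gs fc q (LV q) (LV q) = ∑ i, ∑ j, fc.g i j q * q.2 i * q.2 j := by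
  simp [Gs, dely, LV, mul_assoc]

lemma gsLVddx (k : Fin n) (q : Pt n) :
    Gs fc q (LV q) (ddx fc k q) = 0 := by
  have hd : ∀ j, dely fc j q (ddx fc k q) = 0 := by
    intro j
    simp [dely, ddx, Pi.single_apply]
  apply Finset.sum_eq_zero
  intro i _
  apply Finset.sum_eq_zero
  intro j _
  rw [hd j]
  simp [LV]

/-! ### Lie bracket computations -/

def clmLV : Pt n →L[ℝ] Pt n :=
  (0 : Pt n →L[ℝ] (Fin n → ℝ)).prod (ContinuousLinearMap.snd ℝ (Fin n → ℝ) (Fin n → ℝ))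

lemma fderiv_LV (p : Pt n) : fderiv ℝ (LV : VF n) p = clmLV := by
  have h : (LV : VF n) = ⇑(clmLV (n := n)) := rfl
  rw [h]
  exact clmLV.fderiv

lemma lie_LV_LV (p : Pt n) : lie (LV : VF n) LV p = 0 := sub_self _

lemma lie_LV_dyv (k : Fin n) (p : Pt n) : lie (LV : VF n) (dyv k) p = -(ey k) := by
  show fderiv ℝ (dyv k) p (LV p) - fderiv ℝ (LV : VF n) p (dyv k p) = -(ey k)
  have h1 : fderiv ℝ (dyv k : VF n) p = 0 := fderiv_const_apply _
  rw [h1, fderiv_LV]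
  show 0 - clmLV (ey k) = -(ey k)
  have h2 : clmLV (ey k) = ey k := rfl
  rw [h2, zero_sub]

lemma lie_LV_ddx (k : Fin n) {p : Pt n} (hp : p ∈ fc.U) :
    lie (LV : VF n) (ddx fc k) p = 0 := by
  show fderiv ℝ (ddx fc k) p (LV p) - fderiv ℝ (LV : VF n) p (ddx fc k p) = 0
  have hZ : HasFDerivAt (ddx fc k)
      ((0 : Pt n →L[ℝ] (Fin n → ℝ)).prod
        (ContinuousLinearMap.pi fun j => -fderiv ℝ (fc.N k j) p)) p := by
    apply HasFDerivAt.prodMk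
    · exact hasFDerivAt_const _ _
    · exact hasFDerivAt_pi.mpr fun j =>
        ((diffat fc (fc.Nsmooth k j) hp).hasFDerivAt).neg
  rw [hZ.fderiv, fderiv_LV]
  have h1 : ((0 : Pt n →L[ℝ] (Fin n → ℝ)).prod
      (ContinuousLinearMap.pi fun j => -fderiv ℝ (fc.N k j) p)) (LV p)
      = ((0 : Fin n → ℝ), fun j => -(fc.N k j p)) := by
    apply Prod.ext
    · rfl
    · show (fun j => (-fderiv ℝ (fc.N k j) p) (LV p)) = fun j => -(fc.N k j p)
      funext j
      show -(fderiv ℝ (fc.N k j) p (0, p.2)) = -(fc.N k j p)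
      rw [eulerN fc k j hp]
  have h2 : clmLV (ddx fc k p) = ((0 : Fin n → ℝ), fun j => -(fc.N k j p)) := rfl
  rw [h1, h2, sub_self]

/-! ### Koszul formula computations -/

lemma hLVsmooth : ContDiffOn ℝ (⊤:ℕ∞) (LV : VF n) fc.U :=
  ((contDiff_const (c := (0 : Fin n → ℝ))).prodMk contDiff_snd).contDiffOn

lemma hdyvsmooth (k : Fin n) : ContDiffOn ℝ (⊤:ℕ∞) (dyv k : VF n) fc.U :=
  contDiffOn_const

lemma hddxsmooth (k : Fin n) : ContDiffOn ℝ (⊤:ℕ∞) (ddx fc k) fc.U :=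
  ContDiffOn.prodMk contDiffOn_const
    (contDiffOn_pi.mpr fun j => (fc.Nsmooth k j).neg)

lemma koszul_dyv (nab : VF n → VF n → VF n) (hnab : IsLeviCivita fc nab)
    (k : Fin n) {p : Pt n} (hp : p ∈ fc.U) :
    2 * Gs fc p (nab LV LV p) (ey k) = Eyf fc k p := by
  have hK := hnab LV LV (dyv k) (hLVsmooth fc) (hLVsmooth fc) (hdyvsmooth fc k) p hp
  have t1 : Dv LV (fun q => Gs fc q (LV q) (dyv k q)) p = (1/2) * Eyf fc k p := by
    have he : (fun q => Gs fc q (LV q) (dyv k q)) =ᶠ[nhds p]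
        fun q => (1/2) * Eyf fc k q := by
      filter_upwards [fc.hUopen.mem_nhds hp] with q hq
      show Gs fc q (LV q) (ey k) = (1/2) * Eyf fc k q
      rw [gsLVdyv fc k q, gy' fc hq k]
    show fderiv ℝ (fun q => Gs fc q (LV q) (dyv k q)) p (LV p) = _
    rw [he.fderiv_eq, fderiv_const_mul (diffat fc (hEys fc k) hp)]
    show (1/2 : ℝ) * fderiv ℝ (Eyf fc k) p (0, p.2) = _
    rw [eulerEy fc k hp]
  have t3 : Dv (dyv k) (fun q => Gs fc q (LV q) (LV q)) p = Eyf fc k p := by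
    have he : (fun q => Gs fc q (LV q) (LV q)) =ᶠ[nhds p] Ef fc := by
      filter_upwards [fc.hUopen.mem_nhds hp] with q hq
      rw [gsLVLV fc q, Eid fc hq]
    show fderiv ℝ (fun q => Gs fc q (LV q) (LV q)) p (dyv k p) = _
    rw [he.fderiv_eq]
    rfl
  have t4 : Gs fc p (lie LV (dyv k) p) (LV p) = -((1/2) * Eyf fc k p) := by
    rw [lie_LV_dyv, Gs_neg_left, Gs_ey_LV, gy fc hp k]
  have t5 : Gs fc p (lie LV LV p) (dyv k p) = 0 := by
    rw [lie_LV_LV, Gs_zero_left]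
  rw [t1, t3, t4, t5] at hK
  have hconv : Gs fc p (nab LV LV p) (dyv k p) = Gs fc p (nab LV LV p) (ey k) := rfl
  rw [hconv] at hK
  linarith

lemma koszul_ddx (nab : VF n → VF n → VF n) (hnab : IsLeviCivita fc nab)
    (k : Fin n) {p : Pt n} (hp : p ∈ fc.U) :
    Gs fc p (nab LV LV p) (ddx fc k p) = 0 := by
  have hK := hnab LV LV (ddx fc k) (hLVsmooth fc) (hLVsmooth fc) (hddxsmooth fc k) p hp
  have t1 : Dv LV (fun q => Gs fc q (LV q) (ddx fc k q)) p = 0 := by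
    have he : (fun q => Gs fc q (LV q) (ddx fc k q)) = fun _ => (0:ℝ) :=
      funext (gsLVddx fc k)
    show fderiv ℝ (fun q => Gs fc q (LV q) (ddx fc k q)) p (LV p) = 0
    rw [he, fderiv_fun_const]
    rfl
  have t3 : Dv (ddx fc k) (fun q => Gs fc q (LV q) (LV q)) p = 0 := by
    have he : (fun q => Gs fc q (LV q) (LV q)) =ᶠ[nhds p] Ef fc := by
      filter_upwards [fc.hUopen.mem_nhds hp] with q hq
      rw [gsLVLV fc q, Eid fc hq]
    show fderiv ℝ (fun q => Gs fc q (LV q) (LV q)) p (ddx fc k p) = 0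
    rw [he.fderiv_eq]
    have hsplit : (ddx fc k p : Pt n)
        = ex k + (((0 : Fin n → ℝ), fun j => -(fc.N k j p)) : Pt n) := by
      apply Prod.ext
      · show Pi.single k 1 = Pi.single k 1 + 0
        rw [add_zero]
      · show (fun j => -(fc.N k j p)) = 0 + fun j => -(fc.N k j p)
        rw [zero_add]
    rw [hsplit, map_add, vert_decomp (fderiv ℝ (Ef fc) p) (fun j => -(fc.N k j p))]
    have h2 : ∑ j, (fun j => -(fc.N k j p)) j * fderiv ℝ (Ef fc) p (ey j)
        = -∑ j, Eyf fc j p * fc.N k j p := by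
      rw [← Finset.sum_neg_distrib]
      refine Finset.sum_congr rfl fun j _ => ?_
      show -(fc.N k j p) * fderiv ℝ (Ef fc) p (ey j) = -(Eyf fc j p * fc.N k j p)
      rw [Eyf_apply]; ring
    rw [h2, Dprime fc k hp]
    show Exf fc k p + -(Exf fc k p) = 0
    ring
  have t4 : Gs fc p (lie LV (ddx fc k) p) (LV p) = 0 := by
    rw [lie_LV_ddx fc k hp, Gs_zero_left]
  have t5 : Gs fc p (lie LV LV p) (ddx fc k p) = 0 := by
    rw [lie_LV_LV, Gs_zero_left]
  rw [t1, t3, t4, t5] at hK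
  linarith

/-! ### final assembly -/

lemma dely_ddx (j k : Fin n) (p : Pt n) : dely fc j p (ddx fc k p) = 0 := by
  simp [dely, ddx, Pi.single_apply]

lemma dely_LV (i : Fin n) (p : Pt n) : dely fc i p (LV p) = p.2 i := by
  simp [dely, LV]

lemma Gs_expand (p v w : Pt n) : Gs fc p v w
    = (∑ j, w.1 j * ∑ i, fc.g i j p * v.1 i)
      + ∑ j, dely fc j p w * ∑ i, fc.g i j p * dely fc i p v := by
  unfold Gs
  have h1 : ∀ i : Fin n, ∑ j, fc.g i j p * (v.1 i * w.1 j + dely fc i p v * dely fc j p w)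
      = (∑ j, fc.g i j p * v.1 i * w.1 j)
        + ∑ j, fc.g i j p * dely fc i p v * dely fc j p w := by
    intro i
    rw [← Finset.sum_add_distrib]
    exact Finset.sum_congr rfl fun j _ => by ring
  rw [Finset.sum_congr rfl fun i _ => h1 i, Finset.sum_add_distrib]
  congr 1
  · rw [Finset.sum_comm]
    refine Finset.sum_congr rfl fun j _ => ?_
    rw [Finset.mul_sum]
    exact Finset.sum_congr rfl fun i _ => by ring
  · rw [Finset.sum_comm]
    refine Finset.sum_congr rfl fun j _ => ?_
    rw [Finset.mul_sum]
    exact Finset.sum_congr rfl fun i _ => by ring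

lemma Gs_v_ddx (p v : Pt n) (k : Fin n) :
    Gs fc p v (ddx fc k p) = ∑ i, fc.g i k p * v.1 i := by
  rw [Gs_expand]
  rw [show (∑ j, dely fc j p (ddx fc k p) * ∑ i, fc.g i j p * dely fc i p v) = 0 from
    Finset.sum_eq_zero fun j _ => by rw [dely_ddx]; ring]
  rw [add_zero]
  rw [show (∑ j, (ddx fc k p).1 j * ∑ i, fc.g i j p * v.1 i)
      = ∑ j, (if j = k then (1:ℝ) else 0) * ∑ i, fc.g i j p * v.1 i from
    Finset.sum_congr rfl fun j _ => by rw [show (ddx fc k p).1 j = (Pi.single k 1 : Fin n → ℝ) j from rfl,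
      Pi.single_apply]]
  simp

lemma Gs_v_ey (p v : Pt n) (k : Fin n) :
    Gs fc p v (ey k) = ∑ i, fc.g i k p * dely fc i p v := by
  rw [Gs_expand]
  rw [show (∑ j, (ey k : Pt n).1 j * ∑ i, fc.g i j p * v.1 i) = 0 from
    Finset.sum_eq_zero fun j _ => by
      rw [show ((ey k : Pt n).1 j : ℝ) = 0 from rfl]; ring]
  rw [zero_add]
  rw [show (∑ j, dely fc j p (ey k) * ∑ i, fc.g i j p * dely fc i p v)
      = ∑ j, (if j = k then (1:ℝ) else 0) * ∑ i, fc.g i j p * dely fc i p v from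
    Finset.sum_congr rfl fun j _ => by
      rw [show dely fc j p (ey k) = (Pi.single k 1 : Fin n → ℝ) j from by simp [dely, ey], Pi.single_apply]]
  simp

lemma Gs_symm {p : Pt n} (hp : p ∈ fc.U) (a b : Pt n) :
    Gs fc p a b = Gs fc p b a := by
  unfold Gs
  rw [Finset.sum_comm]
  refine Finset.sum_congr rfl fun j _ => Finset.sum_congr rfl fun i _ => ?_
  rw [fc.gsymm i j p hp]
  ring


/-- The Sasaki lifted metric `G` is bundle-like for the
foliation `V^⊥TM` (the distribution `G`-orthogonal to the vertical Liouville
field `L` in `TTM`): `G(∇_L L, X) + G(∇_L L, X) = 0` for every section `X`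
of `V^⊥TM`, where `∇` is the Levi-Civita connection of `G`. -/
theorem sasaki_bundle_like_Vperp {n : ℕ} (fc : Chart n)
    (nab : VF n → VF n → VF n) (hnab : IsLeviCivita fc nab) :
    ∀ X : VF n, (∀ p ∈ fc.U, InVperp fc p (X p)) →
      ∀ p ∈ fc.U,
        Gs fc p (nab LV LV p) (X p) + Gs fc p (nab LV LV p) (X p) = 0 := by
  intro X hX p hp
  have h1 : ∀ k : Fin n, Gs fc p (nab LV LV p) (ddx fc k p) = 0 :=
    fun k => koszul_ddx fc nab hnab k hp
  have h2 : ∀ k : Fin n, Gs fc p (nab LV LV p) (ey k) = ∑ i, fc.g i k p * p.2 i := by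
    intro k
    have hk := koszul_dyv fc nab hnab k hp
    have hg := gy' fc hp k
    linarith
  have key : Gs fc p (nab LV LV p) (X p) = 0 := by
    rw [Gs_expand]
    have e1 : ∀ j : Fin n, ∑ i, fc.g i j p * (nab LV LV p).1 i = 0 := by
      intro j; rw [← Gs_v_ddx fc p (nab LV LV p) j]; exact h1 j
    have e2 : ∀ j : Fin n, ∑ i, fc.g i j p * dely fc i p (nab LV LV p)
        = ∑ i, fc.g i j p * p.2 i := by
      intro j; rw [← Gs_v_ey fc p (nab LV LV p) j]; exact h2 j
    rw [show (∑ j, (X p).1 j * ∑ i, fc.g i j p * (nab LV LV p).1 i) = 0 from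
      Finset.sum_eq_zero fun j _ => by rw [e1 j]; ring, zero_add]
    rw [show (∑ j, dely fc j p (X p) * ∑ i, fc.g i j p * dely fc i p (nab LV LV p))
        = ∑ j, dely fc j p (X p) * ∑ i, fc.g i j p * p.2 i from
      Finset.sum_congr rfl fun j _ => by rw [e2 j]]
    have e3 : ∑ j, dely fc j p (X p) * ∑ i, fc.g i j p * p.2 i
        = Gs fc p (LV p) (X p) := by
      rw [Gs_expand]
      rw [show (∑ j, (X p).1 j * ∑ i, fc.g i j p * (LV p).1 i) = 0 from
        Finset.sum_eq_zero fun j _ => by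
          rw [show (∑ i, fc.g i j p * (LV p).1 i) = 0 from
            Finset.sum_eq_zero fun i _ => by
              rw [show ((LV p : Pt n).1 i : ℝ) = 0 from rfl]; ring]
          ring, zero_add]
      refine Finset.sum_congr rfl fun j _ => ?_
      congr 1
      exact Finset.sum_congr rfl fun i _ => by rw [dely_LV]
    rw [e3, Gs_symm fc hp]
    exact hX p hp
  rw [key, add_zero]

end FinslerFoliations

end
end
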